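/- arXiv:2512.10022 — 4 statements merged into one kernel-verified Lean document; each statement's English description precedes it below -/
import Mathlib

section
/- Let K = (E, λ) be a connectivity system, let T be a tangle of order k in K, and let X ⊆ E be weakly (λ(X))-branched with λ(X) < k. Then X ∈ T. (Every weakly (k−1)-branched set is contained in every tangle of order at least k.) -/
open Set

variable {α : Type*} {V : Type*}

/-- An (unbundled) connectivity-system candidate: a ground set together with a
connectivity function on its subsets. -/
structure PreSys (α : Type*) where
  E : Set α
  lam : Set α → ℕ

/-- `K` is a connectivity system: the ground set is finite and the connectivity
function is symmetric and submodular on subsets of the ground set. -/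
def PreSys.IsConnSys (K : PreSys α) : Prop :=
  K.E.Finite ∧
  (∀ X ⊆ K.E, K.lam X = K.lam (K.E \ X)) ∧
  (∀ X ⊆ K.E, ∀ Y ⊆ K.E, K.lam (X ∩ Y) + K.lam (X ∪ Y) ≤ K.lam X + K.lam Y)

/-- A tangle of order `k` in a connectivity system. -/
def IsTangle (K : PreSys α) (k : ℕ) (T : Set (Set α)) : Prop :=
  (∀ A ∈ T, A ⊆ K.E ∧ K.lam A < k) ∧
  (∀ A ⊆ K.E, K.lam A < k → (A ∈ T ↔ (K.E \ A) ∉ T)) ∧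
  (∀ A ∈ T, ∀ B ∈ T, ∀ C ∈ T, A ∪ B ∪ C ≠ K.E) ∧
  (∀ A ∈ T, A.ncard ≠ K.E.ncard - 1)

/-- `K` dominates `K₀`. -/
def Dominates (K K₀ : PreSys α) : Prop :=
  K₀.E ⊆ K.E ∧ ∀ X ⊆ K₀.E, K₀.lam X ≤ K.lam X

/-- The collection of subsets of `K.E` of `K`-connectivity `< k` whose trace on
`K₀.E` lies in `T₀`; when `K` dominates `K₀` and `T₀` is a tangle, this is the
tangle induced by `T₀` in `K`. -/
def InducedTangle (K K₀ : PreSys α) (k : ℕ) (T₀ : Set (Set α)) : Set (Set α) :=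
  {X | X ⊆ K.E ∧ K.lam X < k ∧ X ∩ K₀.E ∈ T₀}

/-- `K₀` adheres to `K`. -/
def Adheres (K₀ K : PreSys α) : Prop :=
  Dominates K K₀ ∧
  ∀ A B : Set α, A ∪ B = K₀.E → Disjoint A B →
    ∃ X₁ X₂ : Set α, Disjoint X₁ X₂ ∧ (X₁ ∪ X₂ = A ∨ X₁ ∪ X₂ = B) ∧
      K.lam X₁ ≤ K₀.lam A ∧ K.lam X₂ ≤ K₀.lam A

/-- The tangle `T` of order `k` in `K` splits in `K₀`: two distinct tangles of
order `k` in `K₀` both induce `T`. -/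
def Splits (K K₀ : PreSys α) (k : ℕ) (T : Set (Set α)) : Prop :=
  ∃ T₁ T₂ : Set (Set α), T₁ ≠ T₂ ∧ IsTangle K₀ k T₁ ∧ IsTangle K₀ k T₂ ∧
    InducedTangle K K₀ k T₁ = T ∧ InducedTangle K K₀ k T₂ = T

/-- `K` is `k`-entangled: for each `t ≤ k` there is at most one tangle of order `t`. -/
def Entangled (K : PreSys α) (k : ℕ) : Prop :=
  ∀ t ≤ k, ∀ T₁ T₂ : Set (Set α), IsTangle K t T₁ → IsTangle K t T₂ → T₁ = T₂

/-! ### Matroids -/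

/-- The rank of a set in a matroid: the largest cardinality of an independent
subset of `X`. -/
noncomputable def mrank (M : Matroid α) (X : Set α) : ℕ :=
  sSup {n | ∃ I, M.Indep I ∧ I ⊆ X ∧ I.ncard = n}

/-- The connectivity function `λ_M(X) = r(X) + r(E \ X) - r(M) + 1` of a matroid. -/
noncomputable def lamM (M : Matroid α) (X : Set α) : ℕ :=
  mrank M X + mrank M (M.E \ X) - mrank M M.E + 1

/-- The connectivity function of the deletion `M \ e`, expressed via the rank
function of `M` (for `X ⊆ E(M) \ {e}` one has `r_{M\e}(X) = r_M(X)`). -/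
noncomputable def lamDel (M : Matroid α) (e : α) (X : Set α) : ℕ :=
  mrank M X + mrank M ((M.E \ {e}) \ X) - mrank M (M.E \ {e}) + 1

/-- The connectivity function of the contraction `M / e`, expressed via the rank
function of `M` (for `Y ⊆ E(M) \ {e}` one has `r_{M/e}(Y) = r_M(Y ∪ {e}) - r_M({e})`,
and `r(M/e) = r(M) - r_M({e})`). -/
noncomputable def lamCon (M : Matroid α) (e : α) (X : Set α) : ℕ :=
  mrank M (X ∪ {e}) + mrank M (((M.E \ {e}) \ X) ∪ {e}) - mrank M {e} - mrank M M.E + 1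

/-- The connectivity system `K(M)` of a matroid `M`. -/
noncomputable def KM (M : Matroid α) : PreSys α := ⟨M.E, lamM M⟩

/-- The connectivity system `K(M \ e)`. -/
noncomputable def KDel (M : Matroid α) (e : α) : PreSys α := ⟨M.E \ {e}, lamDel M e⟩

/-- The connectivity system `K(M / e)`. -/
noncomputable def KCon (M : Matroid α) (e : α) : PreSys α := ⟨M.E \ {e}, lamCon M e⟩

/-! ### Graphs, cut-rank and pivoting -/

/-- The cut-rank, relative to a ground set `S` of vertices, of a set `X`:
the GF(2)-rank of the adjacency submatrix with rows `X ∩ S` and columns `S \ X`.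
For an induced subgraph of `G` on `S` this is its cut-rank function. -/
noncomputable def cutRankOn (G : SimpleGraph V) [Fintype V] (S X : Set V) : ℕ :=
  letI : Fintype ↥(X ∩ S) := (Set.toFinite _).fintype
  letI : Fintype ↥(S \ X) := (Set.toFinite _).fintype
  letI : DecidableRel G.Adj := Classical.decRel _
  Matrix.rank (Matrix.of fun (a : ↥(X ∩ S)) (b : ↥(S \ X)) =>
    if G.Adj a.1 b.1 then (1 : ZMod 2) else 0)

/-- The cut-rank function `ρ_G` of a graph `G`. -/
noncomputable def cutRank (G : SimpleGraph V) [Fintype V] (X : Set V) : ℕ :=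
  cutRankOn G Set.univ X

/-- Local complementation at a vertex `v`: adjacency among the neighbours of `v`
is complemented. -/
def localComp (G : SimpleGraph V) (v : V) : SimpleGraph V where
  Adj a b := a ≠ b ∧
    ((G.Adj v a ∧ G.Adj v b ∧ ¬ G.Adj a b) ∨ (¬ (G.Adj v a ∧ G.Adj v b) ∧ G.Adj a b))
  symm := by
    constructor
    intro a b h
    obtain ⟨hab, h⟩ := h
    refine ⟨hab.symm, ?_⟩
    rcases h with ⟨h1, h2, h3⟩ | ⟨h1, h2⟩
    · exact Or.inl ⟨h2, h1, fun h => h3 h.symm⟩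
    · exact Or.inr ⟨fun h => h1 ⟨h.2, h.1⟩, h2.symm⟩
  loopless := ⟨fun a h => h.1 rfl⟩

/-- The pivot `G × e` on an edge `e = uv`, defined as `G * u * v * u` where `*`
denotes local complementation. -/
def pivot (G : SimpleGraph V) (u v : V) : SimpleGraph V :=
  localComp (localComp (localComp G u) v) u

/-- The connectivity system `CR(G) = (V(G), ρ_G)`. -/
noncomputable def CR (G : SimpleGraph V) [Fintype V] : PreSys V :=
  ⟨Set.univ, cutRank G⟩

/-- The connectivity system `CR(G - v)` of the graph obtained by deleting the
vertex `v`: ground set `V \ {v}` with the cut-rank computed inside `V \ {v}`. -/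
noncomputable def CRdel (G : SimpleGraph V) [Fintype V] (v : V) : PreSys V :=
  ⟨{v}ᶜ, cutRankOn G {v}ᶜ⟩

/-! ### Partial branch-decompositions -/

/-- A partial branch-decomposition of a connectivity system `K`: a cubic tree
(each vertex of degree 1 or 3) together with a map from the ground set to the
leaves of the tree. -/
structure PBD (K : PreSys α) (V : Type*) where
  tree : SimpleGraph V
  isTree : tree.IsTree
  cubic : ∀ x : V, (tree.neighborSet x).ncard = 1 ∨ (tree.neighborSet x).ncard = 3
  f : α → V
  maps : ∀ a ∈ K.E, (tree.neighborSet (f a)).ncard = 1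

/-- A leaf of the cubic tree of a partial branch-decomposition. -/
def PBD.IsLeaf {K : PreSys α} (D : PBD K V) (x : V) : Prop :=
  (D.tree.neighborSet x).ncard = 1

/-- The side of the edge `uw` of the tree `tr` towards `u`: the elements of the
ground set mapped by `f` into the component of `tr - uw` containing `u`. -/
def edgeSide (K : PreSys α) (tr : SimpleGraph V) (f : α → V) (u w : V) : Set α :=
  {a | a ∈ K.E ∧ (tr.deleteEdges {s(u, w)}).Reachable (f a) u}

/-- The partial branch-decomposition data `(tr, f)` has width at most `t`:
every edge of the tree induces a partition whose sides have connectivity at most `t`. -/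
def widthLE (K : PreSys α) (tr : SimpleGraph V) (f : α → V) (t : ℕ) : Prop :=
  ∀ u w : V, tr.Adj u w → K.lam (edgeSide K tr f u w) ≤ t

/-- The set displayed by the vertex `x`: the elements of the ground set mapped to `x`. -/
def display (K : PreSys α) (f : α → V) (x : V) : Set α :=
  {a | a ∈ K.E ∧ f a = x}

/-- `X` is weakly `t`-branched: `λ(X) ≤ t` and there is a partial
branch-decomposition of width at most `t` in which every leaf displays a subset
of `E \ X` or a singleton. -/
def WeaklyBranched (K : PreSys α) (X : Set α) (t : ℕ) : Prop :=
  K.lam X ≤ t ∧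
    ∃ (V : Type) (_ : Fintype V) (D : PBD K V), widthLE K D.tree D.f t ∧
      ∀ x : V, D.IsLeaf x →
        (display K D.f x ⊆ K.E \ X ∨ ∃ a : α, display K D.f x = {a})

/-- `X` is `t`-branched: there is a partial branch-decomposition of width at most
`t` in which some leaf displays `E \ X` and every other leaf displays at most one
element of `X`. -/
def Branched (K : PreSys α) (X : Set α) (t : ℕ) : Prop :=
  ∃ (V : Type) (_ : Fintype V) (D : PBD K V), widthLE K D.tree D.f t ∧
    ∃ r : V, D.IsLeaf r ∧ display K D.f r = K.E \ X ∧
      ∀ x : V, D.IsLeaf x → x ≠ r → (display K D.f x ∩ X).ncard ≤ 1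

/-- `κ_K(X, Y)`: the minimum connectivity of a set `Z` with `X ⊆ Z ⊆ E \ Y`. -/
noncomputable def kappa (K : PreSys α) (X Y : Set α) : ℕ :=
  sInf {n | ∃ Z : Set α, X ⊆ Z ∧ Z ⊆ K.E \ Y ∧ K.lam Z = n}


open SimpleGraph in
private lemma aux_reach_split {V : Type*} {G : SimpleGraph V} {u : V} : ∀ {y w : V} (_ : G.Walk y w),
    (G.deleteEdges {s(u,w)}).Reachable y u ∨ (G.deleteEdges {s(u,w)}).Reachable y w := by
  intro y w p
  induction p with
  | nil => exact Or.inr Reachable.rfl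
  | @cons a b c h q ih =>
    by_cases he : s(a, b) = s(u, c)
    · rw [Sym2.eq_iff] at he
      rcases he with ⟨rfl, rfl⟩ | ⟨rfl, rfl⟩
      · exact Or.inl Reachable.rfl
      · exact Or.inr Reachable.rfl
    · have hadj : (G.deleteEdges {s(u,c)}).Adj a b := by
        rw [SimpleGraph.deleteEdges_adj]
        exact ⟨h, by simpa using he⟩
      rcases ih with h1 | h1
      · exact Or.inl (hadj.reachable.trans h1)
      · exact Or.inr (hadj.reachable.trans h1)

open SimpleGraph in
private lemma aux_first_step {V : Type*} {G : SimpleGraph V} {x y : V} (p : G.Walk x y)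
    (hp : p.IsPath) (hne : x ≠ y) :
    ∃ v, ∃ r : G.Walk v y, G.Adj x v ∧ x ∉ r.support := by
  cases p with
  | nil => exact absurd rfl hne
  | cons h r =>
    rw [Walk.cons_isPath_iff] at hp
    exact ⟨_, r, h, hp.2⟩

/-- If `T` is a tangle of order `k` in a connectivity system `K` and
`X ⊆ E` is weakly `λ(X)`-branched with `λ(X) < k`, then `X ∈ T`. -/
theorem stmt11 {α : Type*} (K : PreSys α) (hK : K.IsConnSys) (k : ℕ)
    (T : Set (Set α)) (hT : IsTangle K k T) (X : Set α) (hX : X ⊆ K.E)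
    (hlam : K.lam X < k) (hb : WeaklyBranched K X (K.lam X)) :
    X ∈ T := by
  classical
  obtain ⟨hfin, hsymm, hsubm⟩ := hK
  obtain ⟨hT1, hT2, hT3, hT4⟩ := hT
  obtain ⟨hlX, V, instV, D, hw, hleaf⟩ := hb
  by_contra hXT
  have hEX : K.E \ X ∈ T := by
    by_contra h
    exact hXT ((hT2 X hX hlam).mpr h)
  have hconn : D.tree.Connected := D.isTree.isConnected
  have hac : D.tree.IsAcyclic := D.isTree.IsAcyclic
  have bridge : ∀ {u w : V}, D.tree.Adj u w →
      ¬ (D.tree.deleteEdges {s(u,w)}).Reachable u w := by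
    intro u w h
    have hb := (SimpleGraph.isAcyclic_iff_forall_adj_isBridge.mp hac) h
    exact SimpleGraph.isBridge_iff.mp hb
  have reach_tot : ∀ {u w : V}, D.tree.Adj u w → ∀ y : V,
      (D.tree.deleteEdges {s(u,w)}).Reachable y u ∨
      (D.tree.deleteEdges {s(u,w)}).Reachable y w := by
    intro u w _ y
    obtain ⟨p⟩ := hconn.preconnected y w
    exact aux_reach_split p
  have not_both : ∀ {u w y : V}, D.tree.Adj u w →
      (D.tree.deleteEdges {s(u,w)}).Reachable y u →
      ¬ (D.tree.deleteEdges {s(u,w)}).Reachable y w := by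
    intro u w y h h1 h2
    exact bridge h (h1.symm.trans h2)
  have compl : ∀ {u w : V}, D.tree.Adj u w →
      edgeSide K D.tree D.f w u = K.E \ edgeSide K D.tree D.f u w := by
    intro u w h
    ext a
    simp only [edgeSide, Set.mem_setOf_eq, Set.mem_diff]
    constructor
    · rintro ⟨ha, hr⟩
      refine ⟨ha, fun hc => ?_⟩
      rw [Sym2.eq_swap] at hr
      exact not_both h hc.2 hr
    · rintro ⟨ha, hr⟩
      refine ⟨ha, ?_⟩
      rw [Sym2.eq_swap]
      rcases reach_tot h (D.f a) with h1 | h1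
      · exact absurd ⟨ha, h1⟩ hr
      · exact h1
  have orient : ∀ {u w : V}, D.tree.Adj u w →
      (edgeSide K D.tree D.f u w ∈ T ↔ edgeSide K D.tree D.f w u ∉ T) := by
    intro u w h
    have hs : edgeSide K D.tree D.f u w ⊆ K.E := fun a ha => ha.1
    have := hT2 _ hs (lt_of_le_of_lt (hw u w h) hlam)
    rwa [← compl h] at this
  -- the set of "tangle-oriented" directed edges
  have hSne : {p : V × V | D.tree.Adj p.1 p.2 ∧ edgeSide K D.tree D.f p.1 p.2 ∈ T}.Nonempty := by
    obtain ⟨x₀⟩ := hconn.nonempty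
    have hne : (D.tree.neighborSet x₀).Nonempty := by
      rcases D.cubic x₀ with h | h
      · obtain ⟨b, hb⟩ := Set.ncard_eq_one.mp h
        exact ⟨b, by rw [hb]; rfl⟩
      · obtain ⟨b, c, d, _, _, _, hb⟩ := Set.ncard_eq_three.mp h
        exact ⟨b, by rw [hb]; simp⟩
    obtain ⟨u, hu⟩ := hne
    have hu : D.tree.Adj x₀ u := hu
    by_cases hc : edgeSide K D.tree D.f x₀ u ∈ T
    · exact ⟨(x₀, u), hu, hc⟩
    · exact ⟨(u, x₀), hu.symm, (orient hu.symm).mpr hc⟩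
  obtain ⟨⟨u, x⟩, hux, hmax⟩ := Set.exists_max_image
    {p : V × V | D.tree.Adj p.1 p.2 ∧ edgeSide K D.tree D.f p.1 p.2 ∈ T}
    (fun p => {y : V | (D.tree.deleteEdges {s(p.1, p.2)}).Reachable y p.1}.ncard)
    (Set.toFinite _) hSne
  obtain ⟨huxadj, huxT⟩ : D.tree.Adj u x ∧ edgeSide K D.tree D.f u x ∈ T := hux
  -- x is a sink: every edge at x is oriented towards x
  have sink : ∀ v : V, D.tree.Adj v x → edgeSide K D.tree D.f v x ∈ T := by
    intro v hvx
    by_contra hvT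
    have hxv : edgeSide K D.tree D.f x v ∈ T := (orient hvx.symm).mpr hvT
    have hvu : v ≠ u := by
      rintro rfl
      exact hvT huxT
    have hxnot : x ∉ {y : V | (D.tree.deleteEdges {s(u,x)}).Reachable y u} := by
      intro h
      exact bridge huxadj (SimpleGraph.Reachable.symm h)
    have hsub : {y : V | (D.tree.deleteEdges {s(u,x)}).Reachable y u} ⊆
        {y : V | (D.tree.deleteEdges {s(x,v)}).Reachable y x} := by
      intro y hy
      obtain ⟨p⟩ := hy
      have hxp : x ∉ p.support := by
        intro hxs
        exact bridge huxadj (SimpleGraph.Reachable.symm ⟨p.dropUntil x hxs⟩)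
      have hedges : ∀ e ∈ p.edges, e ∈ (D.tree.deleteEdges {s(x,v)}).edgeSet := by
        intro e he
        rw [SimpleGraph.edgeSet_deleteEdges]
        have he1 := p.edges_subset_edgeSet he
        rw [SimpleGraph.edgeSet_deleteEdges] at he1
        refine ⟨he1.1, ?_⟩
        intro hin
        rw [Set.mem_singleton_iff] at hin
        subst hin
        exact hxp (p.fst_mem_support_of_mem_edges he)
      have hadjux : (D.tree.deleteEdges {s(x,v)}).Adj u x := by
        rw [SimpleGraph.deleteEdges_adj]
        refine ⟨huxadj, ?_⟩
        intro hin
        rw [Set.mem_singleton_iff, Sym2.eq_iff] at hin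
        rcases hin with ⟨h1, _⟩ | ⟨h1, _⟩
        · exact huxadj.ne h1
        · exact hvu h1.symm
      exact SimpleGraph.Reachable.trans ⟨p.transfer _ hedges⟩ hadjux.reachable
    have hlt : {y : V | (D.tree.deleteEdges {s(u,x)}).Reachable y u}.ncard <
        {y : V | (D.tree.deleteEdges {s(x,v)}).Reachable y x}.ncard := by
      apply Set.ncard_lt_ncard
      · exact ⟨hsub, fun hba => hxnot (hba (SimpleGraph.Reachable.refl x))⟩
      · exact Set.toFinite _
    have hle := hmax (x, v) ⟨hvx.symm, hxv⟩
    exact absurd (lt_of_lt_of_le hlt hle) (lt_irrefl _)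
  -- every element not mapped to x lies on the far side of some edge at x
  have cover : ∀ a ∈ K.E, D.f a ≠ x →
      ∃ v, D.tree.Adj x v ∧ a ∈ edgeSide K D.tree D.f v x := by
    intro a ha hfa
    obtain ⟨p⟩ := hconn.preconnected x (D.f a)
    obtain ⟨v, r, hxv, hxr⟩ := aux_first_step p.toPath.val p.toPath.prop (fun h => hfa h.symm)
    refine ⟨v, hxv, ha, ?_⟩
    have hedges : ∀ e ∈ r.reverse.edges, e ∈ (D.tree.deleteEdges {s(v,x)}).edgeSet := by
      intro e he
      rw [SimpleGraph.edgeSet_deleteEdges]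
      refine ⟨r.reverse.edges_subset_edgeSet he, ?_⟩
      intro hin
      rw [Set.mem_singleton_iff] at hin
      subst hin
      have := r.reverse.snd_mem_support_of_mem_edges he
      rw [SimpleGraph.Walk.support_reverse, List.mem_reverse] at this
      exact hxr this
    exact ⟨r.reverse.transfer _ hedges⟩
  rcases D.cubic x with hdeg | hdeg
  · -- x is a leaf; its unique neighbour is u
    have hnb : D.tree.neighborSet x = {u} := by
      obtain ⟨b, hb⟩ := Set.ncard_eq_one.mp hdeg
      have hu : u ∈ D.tree.neighborSet x := huxadj.symm
      rw [hb, Set.mem_singleton_iff] at hu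
      rw [hb, hu]
    have hES : edgeSide K D.tree D.f u x = K.E \ display K D.f x := by
      ext a
      simp only [edgeSide, display, Set.mem_setOf_eq, Set.mem_diff]
      constructor
      · rintro ⟨ha, hr⟩
        refine ⟨ha, fun hc => ?_⟩
        rw [hc.2] at hr
        exact bridge huxadj (SimpleGraph.Reachable.symm hr)
      · rintro ⟨ha, hc⟩
        have hfa : D.f a ≠ x := fun h => hc ⟨ha, h⟩
        obtain ⟨v, hxv, hmem⟩ := cover a ha hfa
        have hv : v ∈ D.tree.neighborSet x := hxv
        rw [hnb, Set.mem_singleton_iff] at hv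
        subst hv
        exact ⟨ha, hmem.2⟩
    have hEdxT : K.E \ display K D.f x ∈ T := hES ▸ huxT
    rcases hleaf x hdeg with hsubX | ⟨a, hda⟩
    · -- display x avoids X : three sets from T cover E
      apply hT3 _ hEdxT _ hEX _ hEX
      apply Set.eq_of_subset_of_subset
      · rintro b ((hb | hb) | hb)
        · exact hb.1
        · exact hb.1
        · exact hb.1
      · intro b hb
        by_cases hbX : b ∈ X
        · have : b ∉ display K D.f x := fun hd => (hsubX hd).2 hbX
          exact Or.inl (Or.inl ⟨hb, this⟩)
        · exact Or.inr ⟨hb, hbX⟩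
    · -- display x is a singleton {a} : E \ {a} ∈ T has forbidden size
      have haE : a ∈ K.E := by
        have : a ∈ display K D.f x := by rw [hda]; rfl
        exact this.1
      rw [hda] at hEdxT
      exact hT4 _ hEdxT (Set.ncard_diff_singleton_of_mem haE)
  · -- x has degree 3 : the three edge sides cover E
    obtain ⟨v₁, v₂, v₃, h12, h13, h23, hnb⟩ := Set.ncard_eq_three.mp hdeg
    have h1 : D.tree.Adj x v₁ := by
      have : v₁ ∈ D.tree.neighborSet x := by rw [hnb]; simp
      exact this
    have h2 : D.tree.Adj x v₂ := by
      have : v₂ ∈ D.tree.neighborSet x := by rw [hnb]; simp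
      exact this
    have h3 : D.tree.Adj x v₃ := by
      have : v₃ ∈ D.tree.neighborSet x := by rw [hnb]; simp
      exact this
    apply hT3 _ (sink v₁ h1.symm) _ (sink v₂ h2.symm) _ (sink v₃ h3.symm)
    apply Set.eq_of_subset_of_subset
    · rintro b ((hb | hb) | hb)
      · exact hb.1
      · exact hb.1
      · exact hb.1
    · intro b hb
      have hfb : D.f b ≠ x := by
        intro h
        have := D.maps b hb
        rw [h, hdeg] at this
        exact absurd this (by norm_num)
      obtain ⟨v, hxv, hmem⟩ := cover b hb hfb
      have hv : v ∈ D.tree.neighborSet x := hxv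
      rw [hnb] at hv
      rcases hv with rfl | rfl | rfl
      · exact Or.inl (Or.inl hmem)
      · exact Or.inl (Or.inr hmem)
      · exact Or.inr hmem
end

section
/- Let K = (E, λ) be a connectivity system, let (T, f) be a partial branch-decomposition of K, let r be a leaf displaying the set Y, and let X ⊆ E \ Y. Define f' by f'(x) = f(x) for x ∈ X and f'(x) = r otherwise. If λ(X) = κ_K(X, Y) (the minimum of λ(Z) over all Z with X ⊆ Z ⊆ E \ Y), then the width of every edge of T under (T, f') is at most its width under (T, f). -/
open Set

variable {α : Type*} {V : Type*}

open Classical in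
/-- Re-mapping lemma. If `r` is a leaf of a partial
branch-decomposition displaying `Y`, `X ⊆ E \ Y` and `λ(X) = κ_K(X, Y)`, then
re-mapping every element outside `X` to `r` does not increase any edge width. -/
theorem stmt12 {α : Type*} {V : Type*} [Fintype V] (K : PreSys α) (hK : K.IsConnSys)
    (D : PBD K V) (r : V) (hr : D.IsLeaf r) (X : Set α)
    (hX : X ⊆ K.E \ display K D.f r)
    (hkap : K.lam X = kappa K X (display K D.f r)) :
    ∀ u w : V, D.tree.Adj u w →
      K.lam (edgeSide K D.tree (fun a => if a ∈ X then D.f a else r) u w) ≤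
        K.lam (edgeSide K D.tree D.f u w) := by

  intro u w huw
  obtain ⟨hfin, hsym, hsub⟩ := hK
  set Y := display K D.f r with hY
  set A := edgeSide K D.tree D.f u w with hA
  set A' := edgeSide K D.tree (fun a => if a ∈ X then D.f a else r) u w with hA'
  have hAE : A ⊆ K.E := fun a ha => ha.1
  have hA'E : A' ⊆ K.E := fun a ha => ha.1
  have hXE : X ⊆ K.E := fun a ha => (hX ha).1
  have hkapleZ : ∀ Z, X ⊆ Z → Z ⊆ K.E \ Y → K.lam X ≤ K.lam Z := by
    intro Z h1 h2
    rw [hkap]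
    exact Nat.sInf_le ⟨Z, h1, h2, rfl⟩
  by_cases hru : (D.tree.deleteEdges {s(u,w)}).Reachable r u
  · -- `r` is on the `u` side
    have hA'eq : A' = (X ∩ A) ∪ (K.E \ X) := by
      ext a
      simp only [hA', edgeSide, mem_setOf_eq, mem_union, mem_inter_iff, mem_diff, hA]
      constructor
      · rintro ⟨haE, hre⟩
        by_cases hax : a ∈ X
        · exact Or.inl ⟨hax, haE, by simpa [hax] using hre⟩
        · exact Or.inr ⟨haE, hax⟩
      · rintro (⟨hax, haE, hre⟩ | ⟨haE, hax⟩)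
        · exact ⟨haE, by simpa [hax] using hre⟩
        · exact ⟨haE, by simpa [hax] using hru⟩
    have hcompl : K.E \ A' = X ∩ (K.E \ A) := by
      ext a
      simp only [hA'eq, mem_diff, mem_union, mem_inter_iff, not_or, not_and]
      tauto
    have hYA : Y ⊆ A := by
      intro a ha
      obtain ⟨haE, hfa⟩ := ha
      exact ⟨haE, by rw [hfa]; exact hru⟩
    have hZsub : X ∪ (K.E \ A) ⊆ K.E \ Y := by
      rintro a (hax | ⟨haE, hnA⟩)
      · exact hX hax
      · exact ⟨haE, fun hay => hnA (hYA hay)⟩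
    have hkle : K.lam X ≤ K.lam (X ∪ (K.E \ A)) :=
      hkapleZ _ subset_union_left hZsub
    have hsubm := hsub X hXE (K.E \ A) diff_subset
    have h1 : K.lam A' = K.lam (X ∩ (K.E \ A)) := by
      rw [hsym A' hA'E, hcompl]
    have h2 : K.lam A = K.lam (K.E \ A) := hsym A hAE
    omega
  · -- `r` is not on the `u` side
    have hA'eq : A' = X ∩ A := by
      ext a
      simp only [hA', edgeSide, mem_setOf_eq, mem_inter_iff, hA]
      constructor
      · rintro ⟨haE, hre⟩
        by_cases hax : a ∈ X
        · exact ⟨hax, haE, by simpa [hax] using hre⟩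
        · exact absurd (by simpa [hax] using hre) hru
      · rintro ⟨hax, haE, hre⟩
        exact ⟨haE, by simpa [hax] using hre⟩
    have hZsub : X ∪ A ⊆ K.E \ Y := by
      rintro a (hax | ⟨haE, hre⟩)
      · exact hX hax
      · refine ⟨haE, fun hay => hru ?_⟩
        rw [← hay.2]; exact hre
    have hkle : K.lam X ≤ K.lam (X ∪ A) :=
      hkapleZ _ subset_union_left hZsub
    have hsubm := hsub X hXE A hAE
    rw [hA'eq]
    omega
end

section
/- Let T be a tangle of order k in a k-entangled connectivity system K = (E, λ), and let X ∈ T be T-linked (there is no Y ∈ T with X ⊆ Y and λ(Y) < λ(X)). Then X is λ(X)-branched: there is a partial branch-decomposition of width at most λ(X) in which one leaf displays E \ X and every other leaf displays at most one element of X. -/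
open Set

variable {α : Type*} {V : Type*}

section Part1

variable {α : Type*} {K : PreSys α} {k : ℕ} {T : Set (Set α)}

/-- An (unbundled) connectivity-system candidate. -/
-- we reuse the definitions from the main file; here assume they exist.

lemma lamE_eq (hK : K.IsConnSys) : K.lam K.E = K.lam ∅ := by
  have := hK.2.1 K.E (subset_refl _)
  simpa using this

lemma lam_symm (hK : K.IsConnSys) {A : Set α} (h : A ⊆ K.E) :
    K.lam (K.E \ A) = K.lam A := (hK.2.1 A h).symm

lemma lam_empty_le (hK : K.IsConnSys) {B : Set α} (hB : B ⊆ K.E) :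
    K.lam ∅ ≤ K.lam B := by
  have hsub := hK.2.2 B hB (K.E \ B) diff_subset
  have h1 : B ∩ (K.E \ B) = ∅ := by ext x; simp
  have h2 : B ∪ (K.E \ B) = K.E := union_diff_cancel hB
  rw [h1, h2, lamE_eq hK, lam_symm hK hB] at hsub
  omega

lemma tangle_subset_E (hT : IsTangle K k T) {A : Set α} (hA : A ∈ T) : A ⊆ K.E :=
  (hT.1 A hA).1

lemma tangle_lam_lt (hT : IsTangle K k T) {A : Set α} (hA : A ∈ T) : K.lam A < k :=
  (hT.1 A hA).2

lemma tangle_compl_not_mem (hT : IsTangle K k T) {A : Set α} (hA : A ∈ T) :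
    K.E \ A ∉ T :=
  (hT.2.1 A (tangle_subset_E hT hA) (tangle_lam_lt hT hA)).mp hA

lemma tangle_orient (hT : IsTangle K k T) {A : Set α} (hA : A ⊆ K.E)
    (hlt : K.lam A < k) (hnot : A ∉ T) : K.E \ A ∈ T := by
  by_contra h
  exact hnot ((hT.2.1 A hA hlt).mpr h)

lemma tangle_union_mem (hT : IsTangle K k T) {A B : Set α} (hA : A ∈ T) (hB : B ∈ T)
    (hlt : K.lam (A ∪ B) < k) : A ∪ B ∈ T := by
  by_contra h
  have hsub : A ∪ B ⊆ K.E := union_subset (tangle_subset_E hT hA) (tangle_subset_E hT hB)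
  have hc := tangle_orient hT hsub hlt h
  exact hT.2.2.1 A hA B hB _ hc (by rw [union_diff_cancel hsub])

lemma tangle_subset_mem (hT : IsTangle K k T) {W P : Set α} (hW : W ∈ T) (hP : P ⊆ W)
    (hlt : K.lam P < k) : P ∈ T := by
  by_contra h
  have hPE : P ⊆ K.E := hP.trans (tangle_subset_E hT hW)
  have hc := tangle_orient hT hPE hlt h
  refine hT.2.2.1 _ hc W hW W hW ?_
  apply subset_antisymm
  · exact union_subset (union_subset diff_subset (tangle_subset_E hT hW)) (tangle_subset_E hT hW)
  · intro x hx
    by_cases hxP : x ∈ P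
    · exact Or.inl (Or.inr (hP hxP))
    · exact Or.inl (Or.inl ⟨hx, hxP⟩)

/-- `W` is `T`-linked. -/
def LinkedIn (K : PreSys α) (T : Set (Set α)) (W : Set α) : Prop :=
  W ∈ T ∧ ∀ Z ∈ T, W ⊆ Z → K.lam W ≤ K.lam Z

lemma exists_minlink (hT : IsTangle K k T) {P : Set α} (hP : P ∈ T) :
    ∃ Y, Y ∈ T ∧ P ⊆ Y ∧ K.lam Y ≤ K.lam P ∧ ∀ Z ∈ T, P ⊆ Z → K.lam Y ≤ K.lam Z := by
  set s : Set ℕ := {n | ∃ Z, Z ∈ T ∧ P ⊆ Z ∧ K.lam Z = n} with hs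
  have hne : s.Nonempty := ⟨K.lam P, P, hP, subset_refl _, rfl⟩
  obtain ⟨Y, hY, hPY, hlam⟩ := Nat.sInf_mem hne
  refine ⟨Y, hY, hPY, ?_, ?_⟩
  · rw [hlam]; exact Nat.sInf_le ⟨P, hP, subset_refl _, rfl⟩
  · intro Z hZ hPZ
    rw [hlam]; exact Nat.sInf_le ⟨Z, hZ, hPZ, rfl⟩

lemma minlink_linked (hT : IsTangle K k T) {P Y : Set α} (hY : Y ∈ T) (hPY : P ⊆ Y)
    (hmin : ∀ Z ∈ T, P ⊆ Z → K.lam Y ≤ K.lam Z) : LinkedIn K T Y :=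
  ⟨hY, fun Z hZ hYZ => hmin Z hZ (hPY.trans hYZ)⟩

lemma linked_inter (hK : K.IsConnSys) (hT : IsTangle K k T) {W A : Set α}
    (hW : LinkedIn K T W) (hA : A ∈ T) : K.lam (W ∩ A) ≤ K.lam A := by
  have hWE := tangle_subset_E hT hW.1
  have hAE := tangle_subset_E hT hA
  have hsub := hK.2.2 W hWE A hAE
  by_cases hlt : K.lam (W ∪ A) < k
  · have := hW.2 _ (tangle_union_mem hT hW.1 hA hlt) subset_union_left
    omega
  · have := tangle_lam_lt hT hW.1
    omega

lemma trunc_tangle (hK : K.IsConnSys) (hT : IsTangle K k T) {t' : ℕ} (h : t' ≤ k) :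
    IsTangle K t' {A | A ∈ T ∧ K.lam A < t'} := by
  refine ⟨fun A hA => ⟨tangle_subset_E hT hA.1, hA.2⟩, ?_, ?_, ?_⟩
  · intro A hAE hlt
    constructor
    · rintro ⟨hAT, _⟩ ⟨hcT, _⟩
      exact tangle_compl_not_mem hT hAT hcT
    · intro hnot
      have hclam : K.lam (K.E \ A) < t' := by rw [lam_symm hK hAE]; exact hlt
      have hcnot : K.E \ A ∉ T := fun hc => hnot ⟨hc, hclam⟩
      exact ⟨(hT.2.1 A hAE (lt_of_lt_of_le hlt h)).mpr hcnot, hlt⟩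
  · intro A hA B hB C hC
    exact hT.2.2.1 A hA.1 B hB.1 C hC.1
  · intro A hA
    exact hT.2.2.2 A hA.1

lemma lam_singleton_le (hK : K.IsConnSys) (hk : k ≤ k) (hent : Entangled K k)
    (hT : IsTangle K k T) {W : Set α} (hW : W ∈ T) {e : α} (he : e ∈ W) :
    K.lam {e} ≤ K.lam W := by
  by_contra hgt
  push_neg at hgt
  have hWE := tangle_subset_E hT hW
  have heE : e ∈ K.E := hWE he
  have ht' : K.lam W + 1 ≤ k := tangle_lam_lt hT hW
  have hEfin := hK.1
  set Te : Set (Set α) := {A | A ⊆ K.E ∧ K.lam A ≤ K.lam W ∧ e ∉ A} with hTe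
  have htangle : IsTangle K (K.lam W + 1) Te := by
    refine ⟨fun A hA => ⟨hA.1, by have := hA.2.1; omega⟩, ?_, ?_, ?_⟩
    · intro A hAE hlt
      have hlt' : K.lam A ≤ K.lam W := by omega
      constructor
      · rintro ⟨_, _, heA⟩ ⟨_, _, heC⟩
        exact heC ⟨heE, heA⟩
      · intro hnot
        refine ⟨hAE, hlt', ?_⟩
        by_contra heA
        exact hnot ⟨diff_subset, by rw [lam_symm hK hAE]; omega, fun h => h.2 heA⟩
    · rintro A ⟨_, _, heA⟩ B ⟨_, _, heB⟩ C ⟨_, _, heC⟩ heq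
      have : e ∈ A ∪ B ∪ C := heq ▸ heE
      rcases this with (h | h) | h
      exacts [heA h, heB h, heC h]
    · rintro A ⟨hAE, hAlam, heA⟩ hcard
      have hsub : A ⊆ K.E \ {e} := fun x hx => ⟨hAE hx, fun hxe => heA (hxe ▸ hx)⟩
      have hc2 : (K.E \ {e}).ncard = K.E.ncard - 1 := Set.ncard_diff_singleton_of_mem heE
      have : A = K.E \ {e} := by
        apply Set.eq_of_subset_of_ncard_le hsub _ (hEfin.diff)
        omega
      rw [this, lam_symm hK (singleton_subset_iff.mpr heE)] at hAlam
      omega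
  have heqT := hent (K.lam W + 1) ht' _ _ (trunc_tangle hK hT ht') htangle
  have hWin : W ∈ {A | A ∈ T ∧ K.lam A < K.lam W + 1} := ⟨hW, by omega⟩
  rw [heqT] at hWin
  exact hWin.2.2 he

end Part1

section Part2

variable {α : Type*} {K : PreSys α} {k : ℕ} {T : Set (Set α)}

lemma split_lemma (hK : K.IsConnSys) (hent : Entangled K k)
    (hT : IsTangle K k T) {W : Set α} (hW : LinkedIn K T W) (hW2 : 2 ≤ W.ncard) :
    ∃ S1 S2 : Set α, S1 ∪ S2 = W ∧ Disjoint S1 S2 ∧ S1.Nonempty ∧ S2.Nonempty ∧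
      K.lam S1 ≤ K.lam W ∧ K.lam S2 ≤ K.lam W := by
  have hWE := tangle_subset_E hT hW.1
  have hEfin := hK.1
  have hWfin : W.Finite := hEfin.subset hWE
  have hWne : W.Nonempty := by
    rw [← Set.ncard_pos hWfin]; omega
  have hWk : K.lam W < k := tangle_lam_lt hT hW.1
  have hWdiffc : ∀ A : Set α, W \ (K.E \ A) = W ∩ A := by
    intro A
    ext x; simp only [mem_diff, mem_inter_iff]
    constructor
    · rintro ⟨hxW, hn⟩
      refine ⟨hxW, ?_⟩
      by_contra hxA
      exact hn ⟨hWE hxW, hxA⟩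
    · rintro ⟨hxW, hxA⟩
      exact ⟨hxW, fun h => h.2 hxA⟩
  have hWinterc : ∀ A : Set α, W ∩ (K.E \ A) = W \ A := by
    intro A
    ext x; simp only [mem_diff, mem_inter_iff]
    exact ⟨fun ⟨h, _, hn⟩ => ⟨h, hn⟩, fun ⟨h, hn⟩ => ⟨h, hWE h, hn⟩⟩
  have hcover : ∃ P Q : Set α, P ⊆ W ∧ Q ⊆ W ∧ P ∪ Q = W ∧ P ≠ W ∧ Q ≠ W ∧
      K.lam P ≤ K.lam W ∧ K.lam Q ≤ K.lam W := by
    by_contra hunsplit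
    push_neg at hunsplit
    have hone : ∀ A : Set α, A ⊆ K.E → K.lam A ≤ K.lam W →
        K.lam (W ∩ A) ≤ K.lam W ∨ K.lam (W \ A) ≤ K.lam W := by
      intro A hAE hAlam
      by_cases hAT : A ∈ T
      · exact Or.inl (le_trans (linked_inter hK hT hW hAT) hAlam)
      · have hAc : K.E \ A ∈ T := tangle_orient hT hAE (by omega) hAT
        have := linked_inter hK hT hW hAc
        rw [hWinterc A, lam_symm hK hAE] at this
        exact Or.inr (le_trans this hAlam)
    have hnotboth : ∀ A : Set α, (W ∩ A).Nonempty → (W \ A).Nonempty →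
        ¬(K.lam (W ∩ A) ≤ K.lam W ∧ K.lam (W \ A) ≤ K.lam W) := by
      rintro A hne1 hne2 ⟨h1, h2⟩
      have hlt : K.lam W < K.lam (W \ A) := by
        refine hunsplit (W ∩ A) (W \ A) inter_subset_left diff_subset ?_ ?_ ?_ h1
        · ext x; by_cases hx : x ∈ A <;> simp [hx]
        · intro heq
          obtain ⟨x, hx1, hx2⟩ := hne2
          have hmem : x ∈ W ∩ A := by rw [heq]; exact hx1
          exact hx2 hmem.2
        · intro heq
          obtain ⟨x, hx1, hx2⟩ := hne1
          have hmem : x ∈ W \ A := by rw [heq]; exact hx1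
          exact hmem.2 hx2
      omega
    set TW : Set (Set α) := {A | A ⊆ K.E ∧ K.lam A ≤ K.lam W ∧
      K.lam (W ∩ A) ≤ K.lam W ∧ (W \ A).Nonempty} with hTWdef
    have ht' : K.lam W + 1 ≤ k := hWk
    have htangle : IsTangle K (K.lam W + 1) TW := by
      refine ⟨fun A hA => ⟨hA.1, by have := hA.2.1; omega⟩, ?_, ?_, ?_⟩
      · -- orientation
        intro A hAE hlt
        have hAlam : K.lam A ≤ K.lam W := by omega
        have hcE : K.E \ A ⊆ K.E := diff_subset
        have hclam : K.lam (K.E \ A) ≤ K.lam W := by rw [lam_symm hK hAE]; exact hAlam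
        have hmemA : A ∈ TW ↔ (K.lam (W ∩ A) ≤ K.lam W ∧ (W \ A).Nonempty) := by
          constructor
          · rintro ⟨_, _, h3, h4⟩; exact ⟨h3, h4⟩
          · rintro ⟨h3, h4⟩; exact ⟨hAE, hAlam, h3, h4⟩
        have hmemC : (K.E \ A) ∈ TW ↔ (K.lam (W \ A) ≤ K.lam W ∧ (W ∩ A).Nonempty) := by
          constructor
          · rintro ⟨_, _, h3, h4⟩
            rw [hWinterc A] at h3
            rw [hWdiffc A] at h4
            exact ⟨h3, h4⟩
          · rintro ⟨h3, h4⟩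
            refine ⟨hcE, hclam, ?_, ?_⟩
            · rw [hWinterc A]; exact h3
            · rw [hWdiffc A]; exact h4
        rw [hmemA, hmemC]
        by_cases h1 : (W ∩ A).Nonempty
        · by_cases h2 : (W \ A).Nonempty
          · rcases hone A hAE hAlam with hsml | hsml
            · have hbig : ¬ K.lam (W \ A) ≤ K.lam W := fun hb => hnotboth A h1 h2 ⟨hsml, hb⟩
              constructor
              · intro _
                exact fun hc => hbig hc.1
              · intro _
                exact ⟨hsml, h2⟩
            · have hbig : ¬ K.lam (W ∩ A) ≤ K.lam W := fun hb => hnotboth A h1 h2 ⟨hb, hsml⟩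
              constructor
              · rintro ⟨hb, _⟩
                exact absurd hb hbig
              · intro hnot
                exact absurd ⟨hsml, h1⟩ hnot
          · -- W \ A = ∅
            have hQ : W \ A = ∅ := not_nonempty_iff_eq_empty.mp h2
            have h1' : W ∩ A = W := by
              ext x
              simp only [mem_inter_iff, and_iff_left_iff_imp]
              intro hxW
              by_contra hxA
              have hmem : x ∈ W \ A := ⟨hxW, hxA⟩
              rw [hQ] at hmem
              exact hmem
            constructor
            · rintro ⟨_, hb⟩
              exact absurd hb h2
            · intro hnot
              exfalso
              apply hnot
              refine ⟨?_, ?_⟩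
              · rw [hQ]; exact lam_empty_le hK hWE
              · rw [h1']; exact hWne
        · -- W ∩ A = ∅
          have hP : W ∩ A = ∅ := not_nonempty_iff_eq_empty.mp h1
          have hQ : W \ A = W := by
            ext x
            simp only [mem_diff, and_iff_left_iff_imp]
            intro hxW hxA
            have hmem : x ∈ W ∩ A := ⟨hxW, hxA⟩
            rw [hP] at hmem
            exact hmem
          constructor
          · rintro ⟨_, _⟩
            exact fun hc => h1 hc.2
          · intro _
            refine ⟨?_, ?_⟩
            · rw [hP]; exact lam_empty_le hK hWE
            · rw [hQ]; exact hWne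
      · -- cond3
        rintro A ⟨hAE, hAlam, hAsml, hAne⟩ B ⟨hBE, hBlam, hBsml, hBne⟩
          C ⟨hCE, hClam, hCsml, hCne⟩ heq
        have hWcov : (W ∩ A) ∪ (W ∩ B) ∪ (W ∩ C) = W := by
          rw [← inter_union_distrib_left, ← inter_union_distrib_left, heq]
          exact inter_eq_left.mpr hWE
        have hprop : ∀ D : Set α, D ⊆ K.E → K.lam D ≤ K.lam W →
            K.lam (W ∩ D) ≤ K.lam W → (W \ D).Nonempty → (W ∩ D).Nonempty → D ∈ T := by
          intro D hDE hDlam hDsml hDne hDint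
          by_contra hDT
          have hDc : K.E \ D ∈ T := tangle_orient hT hDE (by omega) hDT
          have := linked_inter hK hT hW hDc
          rw [hWinterc D, lam_symm hK hDE] at this
          exact hnotboth D hDint hDne ⟨hDsml, le_trans this hDlam⟩
        by_cases hA1 : (W ∩ A).Nonempty
        · by_cases hB1 : (W ∩ B).Nonempty
          · by_cases hC1 : (W ∩ C).Nonempty
            · exact hT.2.2.1 A (hprop A hAE hAlam hAsml hAne hA1)
                B (hprop B hBE hBlam hBsml hBne hB1)
                C (hprop C hCE hClam hCsml hCne hC1) heq
            · -- W ∩ C = ∅ : A, B cover W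
              have hC0 : W ∩ C = ∅ := not_nonempty_iff_eq_empty.mp hC1
              rw [hC0, union_empty] at hWcov
              have hlt : K.lam W < K.lam (W ∩ B) := by
                refine hunsplit (W ∩ A) (W ∩ B) inter_subset_left inter_subset_left hWcov
                  ?_ ?_ hAsml
                · intro h
                  obtain ⟨x, hx⟩ := hAne
                  have hmem : x ∈ W ∩ A := by rw [h]; exact hx.1
                  exact hx.2 hmem.2
                · intro h
                  obtain ⟨x, hx⟩ := hBne
                  have hmem : x ∈ W ∩ B := by rw [h]; exact hx.1
                  exact hx.2 hmem.2
              omega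
          · have hB0 : W ∩ B = ∅ := not_nonempty_iff_eq_empty.mp hB1
            rw [hB0, union_empty] at hWcov
            have hlt : K.lam W < K.lam (W ∩ C) := by
              refine hunsplit (W ∩ A) (W ∩ C) inter_subset_left inter_subset_left hWcov
                ?_ ?_ hAsml
              · intro h
                obtain ⟨x, hx⟩ := hAne
                have hmem : x ∈ W ∩ A := by rw [h]; exact hx.1
                exact hx.2 hmem.2
              · intro h
                obtain ⟨x, hx⟩ := hCne
                have hmem : x ∈ W ∩ C := by rw [h]; exact hx.1
                exact hx.2 hmem.2
            omega
        · have hA0 : W ∩ A = ∅ := not_nonempty_iff_eq_empty.mp hA1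
          rw [hA0, empty_union] at hWcov
          have hlt : K.lam W < K.lam (W ∩ C) := by
            refine hunsplit (W ∩ B) (W ∩ C) inter_subset_left inter_subset_left hWcov
              ?_ ?_ hBsml
            · intro h
              obtain ⟨x, hx⟩ := hBne
              have hmem : x ∈ W ∩ B := by rw [h]; exact hx.1
              exact hx.2 hmem.2
            · intro h
              obtain ⟨x, hx⟩ := hCne
              have hmem : x ∈ W ∩ C := by rw [h]; exact hx.1
              exact hx.2 hmem.2
          omega
      · -- cond4
        rintro A ⟨hAE, hAlam, hAsml, hAne⟩ hcard
        obtain ⟨f, hfW, hfA⟩ := hAne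
        have hfE : f ∈ K.E := hWE hfW
        have hsub : A ⊆ K.E \ {f} := fun x hx => ⟨hAE hx, fun hxe => hfA (by rw [mem_singleton_iff] at hxe; rwa [hxe] at hx)⟩
        have hc2 : (K.E \ {f}).ncard = K.E.ncard - 1 := Set.ncard_diff_singleton_of_mem hfE
        have hAeq : A = K.E \ {f} := by
          apply Set.eq_of_subset_of_ncard_le hsub _ (hEfin.diff)
          omega
        have hWA : W ∩ A = W \ {f} := by
          rw [hAeq, hWinterc]
        have hsing : K.lam {f} ≤ K.lam W :=
          lam_singleton_le hK le_rfl hent hT hW.1 hfW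
        have hWfsml : K.lam (W \ {f}) ≤ K.lam W := by rw [← hWA]; exact hAsml
        have hlt : K.lam W < K.lam (W \ {f}) := by
          refine hunsplit {f} (W \ {f}) (singleton_subset_iff.mpr hfW) diff_subset ?_ ?_ ?_
            hsing
          · ext x
            by_cases hx : x = f <;> simp [hx, hfW]
          · intro h
            have : W.ncard = 1 := by rw [← h]; exact Set.ncard_singleton f
            omega
          · intro h
            have : f ∈ W \ {f} := by rw [h]; exact hfW
            exact this.2 rfl
        omega
    have heqT := hent (K.lam W + 1) ht' _ _ (trunc_tangle hK hT ht') htangle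
    have hWin : W ∈ {A | A ∈ T ∧ K.lam A < K.lam W + 1} := ⟨hW.1, by omega⟩
    rw [heqT] at hWin
    obtain ⟨x, hx⟩ := hWin.2.2.2
    exact hx.2 hx.1
  -- disjointify
  obtain ⟨P, Q, hPW, hQW, hPQ, hPne, hQne, hPlam, hQlam⟩ := hcover
  have hPE : P ⊆ K.E := hPW.trans hWE
  have hQE : Q ⊆ K.E := hQW.trans hWE
  have hposi : K.lam (P \ Q) + K.lam (Q \ P) ≤ K.lam P + K.lam Q := by
    have hsub := hK.2.2 P hPE (K.E \ Q) diff_subset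
    have h1 : P ∩ (K.E \ Q) = P \ Q := by
      ext x; simp only [mem_inter_iff, mem_diff]
      exact ⟨fun ⟨h, _, hn⟩ => ⟨h, hn⟩, fun ⟨h, hn⟩ => ⟨h, hPE h, hn⟩⟩
    have h2 : P ∪ (K.E \ Q) = K.E \ (Q \ P) := by
      ext x; simp only [mem_union, mem_diff]
      constructor
      · rintro (h | ⟨h1', h2'⟩)
        · exact ⟨hPE h, fun hc => hc.2 h⟩
        · exact ⟨h1', fun hc => h2' hc.1⟩
      · rintro ⟨hxE, hn⟩
        by_cases hx : x ∈ P
        · exact Or.inl hx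
        · exact Or.inr ⟨hxE, fun hq => hn ⟨hq, hx⟩⟩
    rw [h1, h2, lam_symm hK hQE, lam_symm hK (diff_subset.trans hQE)] at hsub
    omega
  have hWP : (W \ P).Nonempty := by
    rcases Set.exists_of_ssubset (ssubset_of_subset_of_ne hPW hPne) with ⟨x, hx1, hx2⟩
    exact ⟨x, hx1, hx2⟩
  have hWQ : (W \ Q).Nonempty := by
    rcases Set.exists_of_ssubset (ssubset_of_subset_of_ne hQW hQne) with ⟨x, hx1, hx2⟩
    exact ⟨x, hx1, hx2⟩
  by_cases hcase : K.lam (Q \ P) ≤ K.lam W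
  · refine ⟨P, Q \ P, ?_, disjoint_sdiff_right.mono_left le_rfl, ?_, ?_, hPlam, hcase⟩
    · rw [union_diff_self, hPQ]
    · obtain ⟨x, hx1, hx2⟩ := hWQ
      have : x ∈ P := by
        have := hPQ ▸ hx1
        rcases (show x ∈ P ∪ Q from by rw [hPQ]; exact hx1) with h | h
        · exact h
        · exact absurd h hx2
      exact ⟨x, this⟩
    · obtain ⟨x, hx1, hx2⟩ := hWP
      have : x ∈ Q := by
        rcases (show x ∈ P ∪ Q from by rw [hPQ]; exact hx1) with h | h
        · exact absurd h hx2
        · exact h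
      exact ⟨x, this, hx2⟩
  · have hcase2 : K.lam (P \ Q) ≤ K.lam W := by omega
    refine ⟨Q, P \ Q, ?_, disjoint_sdiff_right.mono_left le_rfl, ?_, ?_, hQlam, hcase2⟩
    · rw [union_diff_self, union_comm, hPQ]
    · obtain ⟨x, hx1, hx2⟩ := hWP
      have : x ∈ Q := by
        rcases (show x ∈ P ∪ Q from by rw [hPQ]; exact hx1) with h | h
        · exact absurd h hx2
        · exact h
      exact ⟨x, this⟩
    · obtain ⟨x, hx1, hx2⟩ := hWQ
      have : x ∈ P := by
        rcases (show x ∈ P ∪ Q from by rw [hPQ]; exact hx1) with h | h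
        · exact h
        · exact absurd h hx2
      exact ⟨x, this, hx2⟩

end Part2

section Part3

universe u

/-- Binary set-trees used to describe hierarchical partitions. -/
inductive SBT (α : Type u) : Type u
  | lf (s : Set α) : SBT α
  | nd (l r : SBT α) : SBT α

namespace SBT

variable {α : Type*}

def supp : SBT α → Set α
  | lf s => s
  | nd l r => l.supp ∪ r.supp

def parts : SBT α → Set (Set α)
  | lf s => {s}
  | nd l r => insert (l.supp ∪ r.supp) (l.parts ∪ r.parts)

def sdisj : SBT α → Prop
  | lf _ => True
  | nd l r => Disjoint l.supp r.supp ∧ l.sdisj ∧ r.sdisj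

/-- all leaves are empty or singletons -/
def slv : SBT α → Prop
  | lf s => s = ∅ ∨ ∃ e, s = {e}
  | nd l r => l.slv ∧ r.slv

lemma supp_mem_parts : ∀ t : SBT α, t.supp ∈ t.parts
  | lf s => by simp [supp, parts]
  | nd l r => by simp [supp, parts]

lemma parts_subset_supp : ∀ t : SBT α, ∀ p ∈ t.parts, p ⊆ t.supp
  | lf s => by simp [supp, parts]
  | nd l r => by
    intro p hp
    simp only [parts, Set.mem_insert_iff, Set.mem_union] at hp
    rcases hp with rfl | hp | hp
    · exact subset_refl _
    · exact (parts_subset_supp l p hp).trans Set.subset_union_left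
    · exact (parts_subset_supp r p hp).trans Set.subset_union_right

open Classical in
noncomputable def restr (C : Set α) : SBT α → Option (SBT α)
  | lf s => if (s ∩ C).Nonempty then some (lf (s ∩ C)) else none
  | nd l r =>
    match restr C l, restr C r with
    | some l', some r' => some (nd l' r')
    | some l', none => some l'
    | none, some r' => some r'
    | none, none => none

lemma restr_spec (C : Set α) : ∀ t : SBT α,
    (restr C t = none → t.supp ∩ C = ∅) ∧
    (∀ t', restr C t = some t' → t'.supp = t.supp ∩ C ∧
      (∀ p ∈ t'.parts, ∃ q ∈ t.parts, p = q ∩ C) ∧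
      (t.sdisj → t'.sdisj) ∧ (t.slv → t'.slv))
  | lf s => by
    constructor
    · intro h
      by_cases hne : (s ∩ C).Nonempty
      · simp [restr, if_pos hne] at h
      · exact Set.not_nonempty_iff_eq_empty.mp hne
    · intro t' h
      by_cases hne : (s ∩ C).Nonempty
      · simp only [restr, if_pos hne, Option.some.injEq] at h
        subst h
        refine ⟨rfl, ?_, fun _ => trivial, ?_⟩
        · intro p hp
          simp only [parts, Set.mem_singleton_iff] at hp
          exact ⟨s, by simp [parts], hp⟩
        · intro hslv
          rcases hslv with rfl | ⟨e, rfl⟩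
          · exact Or.inl (by simp)
          · by_cases heC : e ∈ C
            · exact Or.inr ⟨e, by ext x; simp; rintro rfl; exact heC⟩
            · exact Or.inl (by ext x; simp; rintro rfl; exact heC)
      · simp [restr, if_neg hne] at h
  | nd l r => by
    have IHl := restr_spec C l
    have IHr := restr_spec C r
    have hdistrib : (l.supp ∪ r.supp) ∩ C = (l.supp ∩ C) ∪ (r.supp ∩ C) :=
      Set.union_inter_distrib_right _ _ _
    rcases hl : restr C l with _ | l' <;> rcases hr : restr C r with _ | r'
    · constructor
      · intro _
        show (l.supp ∪ r.supp) ∩ C = ∅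
        rw [hdistrib, IHl.1 hl, IHr.1 hr, Set.union_empty]
      · intro t' h
        simp [restr, hl, hr] at h
    · constructor
      · intro h
        simp [restr, hl, hr] at h
      · intro t' h
        simp only [restr, hl, hr, Option.some.injEq] at h
        subst h
        obtain ⟨hsupp, hparts, hsdisj, hslv⟩ := IHr.2 r' hr
        refine ⟨?_, ?_, fun hd => hsdisj hd.2.2, fun hs => hslv hs.2⟩
        · show r'.supp = (l.supp ∪ r.supp) ∩ C
          rw [hdistrib, IHl.1 hl, Set.empty_union, hsupp]
        · intro p hp
          obtain ⟨q, hq, hpq⟩ := hparts p hp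
          exact ⟨q, by simp only [parts, Set.mem_insert_iff, Set.mem_union]; exact Or.inr (Or.inr hq), hpq⟩
    · constructor
      · intro h
        simp [restr, hl, hr] at h
      · intro t' h
        simp only [restr, hl, hr, Option.some.injEq] at h
        subst h
        obtain ⟨hsupp, hparts, hsdisj, hslv⟩ := IHl.2 l' hl
        refine ⟨?_, ?_, fun hd => hsdisj hd.2.1, fun hs => hslv hs.1⟩
        · show l'.supp = (l.supp ∪ r.supp) ∩ C
          rw [hdistrib, IHr.1 hr, Set.union_empty, hsupp]
        · intro p hp
          obtain ⟨q, hq, hpq⟩ := hparts p hp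
          exact ⟨q, by simp only [parts, Set.mem_insert_iff, Set.mem_union]; exact Or.inr (Or.inl hq), hpq⟩
    · constructor
      · intro h
        simp [restr, hl, hr] at h
      · intro t' h
        simp only [restr, hl, hr, Option.some.injEq] at h
        subst h
        obtain ⟨hsuppl, hpartsl, hsdisjl, hslvl⟩ := IHl.2 l' hl
        obtain ⟨hsuppr, hpartsr, hsdisjr, hslvr⟩ := IHr.2 r' hr
        refine ⟨?_, ?_, ?_, fun hs => ⟨hslvl hs.1, hslvr hs.2⟩⟩
        · show l'.supp ∪ r'.supp = (l.supp ∪ r.supp) ∩ C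
          rw [hdistrib, hsuppl, hsuppr]
        · intro p hp
          simp only [parts, Set.mem_insert_iff, Set.mem_union] at hp
          rcases hp with rfl | hp | hp
          · refine ⟨l.supp ∪ r.supp, by simp [parts], ?_⟩
            rw [hdistrib, hsuppl, hsuppr]
          · obtain ⟨q, hq, hpq⟩ := hpartsl p hp
            exact ⟨q, by simp only [parts, Set.mem_insert_iff, Set.mem_union]; exact Or.inr (Or.inl hq), hpq⟩
          · obtain ⟨q, hq, hpq⟩ := hpartsr p hp
            exact ⟨q, by simp only [parts, Set.mem_insert_iff, Set.mem_union]; exact Or.inr (Or.inr hq), hpq⟩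
        · rintro ⟨hd, hdl, hdr⟩
          refine ⟨?_, hsdisjl hdl, hsdisjr hdr⟩
          rw [hsuppl, hsuppr]
          exact (hd.mono Set.inter_subset_left Set.inter_subset_left)

lemma restr_isSome {C : Set α} {t : SBT α} (h : (t.supp ∩ C).Nonempty) :
    ∃ t', restr C t = some t' := by
  rcases ht : restr C t with _ | t'
  · rw [(restr_spec C t).1 ht] at h
    exact absurd h (by simp)
  · exact ⟨t', rfl⟩

end SBT

end Part3

section Part4

variable {α : Type*} {K : PreSys α} {k : ℕ} {T : Set (Set α)}

private lemma meas_lt {a b c d N : ℕ} (h1 : a ≤ c) (h2 : a < c ∨ b < d) (hb : b ≤ N) :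
    a * (N + 1) + b < c * (N + 1) + d := by
  rcases h2 with h2 | h2
  · obtain ⟨e, rfl⟩ : ∃ e, c = a + 1 + e := ⟨c - (a + 1), by omega⟩
    have : (a + 1 + e) * (N + 1) = a * (N + 1) + (N + 1) + e * (N + 1) := by ring
    omega
  · have : a * (N + 1) ≤ c * (N + 1) := Nat.mul_le_mul_right _ h1
    omega

theorem good_tree (hK : K.IsConnSys) (hent : Entangled K k) (hT : IsTangle K k T) :
    ∀ n : ℕ, ∀ W : Set α, LinkedIn K T W → W.Nonempty →
      K.lam W * (K.E.ncard + 1) + W.ncard ≤ n →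
      ∃ t : SBT α, t.supp = W ∧ t.sdisj ∧ t.slv ∧ ∀ p ∈ t.parts, K.lam p ≤ K.lam W := by
  intro n
  induction n using Nat.strong_induction_on with
  | _ n IH =>
  intro W hW hWne hmeas
  set N := K.E.ncard with hN
  have hWT := hW.1
  have hWE := tangle_subset_E hT hWT
  have hEfin := hK.1
  have hWfin : W.Finite := hEfin.subset hWE
  have hWk : K.lam W < k := tangle_lam_lt hT hWT
  have hWN : W.ncard ≤ N := Set.ncard_le_ncard hWE hEfin
  by_cases hsmall : W.ncard ≤ 1
  · -- singleton
    have h1 : W.ncard = 1 := by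
      have := Set.ncard_pos hWfin |>.mpr hWne
      omega
    obtain ⟨e, rfl⟩ := Set.ncard_eq_one.mp h1
    refine ⟨SBT.lf {e}, rfl, trivial, Or.inr ⟨e, rfl⟩, ?_⟩
    intro p hp
    simp only [SBT.parts, Set.mem_singleton_iff] at hp
    subst hp
    exact le_rfl
  · have hW2 : 2 ≤ W.ncard := by omega
    obtain ⟨S1, S2, hunion, hdisj, hS1ne, hS2ne, hS1lam, hS2lam⟩ :=
      split_lemma hK hent hT hW hW2
    have hS1W : S1 ⊆ W := by rw [← hunion]; exact Set.subset_union_left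
    have hS2W : S2 ⊆ W := by rw [← hunion]; exact Set.subset_union_right
    have hS1T : S1 ∈ T := tangle_subset_mem hT hWT hS1W (by omega)
    obtain ⟨Y1, hY1T, hS1Y1, hY1lam, hY1min⟩ := exists_minlink hT hS1T
    obtain ⟨Y, hYT, hS1Y, hYlam, hmin, hC2ne, hC1meas⟩ :
        ∃ Y, Y ∈ T ∧ S1 ⊆ Y ∧ K.lam Y ≤ K.lam S1 ∧
          (∀ Z ∈ T, S1 ⊆ Z → K.lam Y ≤ K.lam Z) ∧ (W \ Y).Nonempty ∧
          (K.lam (W ∩ Y) < K.lam W ∨ (W ∩ Y).ncard < W.ncard) := by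
      rcases le_or_gt (K.lam S1) (K.lam Y1) with hcase | hcase
      · refine ⟨S1, hS1T, subset_refl _, le_rfl,
          fun Z hZ hsub => le_trans hcase (hY1min Z hZ hsub), ?_, Or.inr ?_⟩
        · obtain ⟨x, hx⟩ := hS2ne
          exact ⟨x, hS2W hx, fun hxS1 => (Set.disjoint_left.mp hdisj hxS1) hx⟩
        · have hWS1 : W ∩ S1 = S1 := Set.inter_eq_self_of_subset_right hS1W
          rw [hWS1]
          apply Set.ncard_lt_ncard _ hWfin
          constructor
          · exact hS1W
          · intro hsub
            obtain ⟨x, hx⟩ := hS2ne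
            exact (Set.disjoint_left.mp hdisj (hsub (hS2W hx))) hx
      · refine ⟨Y1, hY1T, hS1Y1, hY1lam, hY1min, ?_, Or.inl ?_⟩
        · by_contra hem
          have : W ⊆ Y1 := by
            rw [Set.not_nonempty_iff_eq_empty] at hem
            exact Set.diff_eq_empty.mp hem
          have := hW.2 Y1 hY1T this
          omega
        · have := linked_inter hK hT hW hY1T
          omega
    set C1 := W ∩ Y with hC1def
    set C2 := W \ Y with hC2def
    have hC1C2 : C1 ∪ C2 = W := Set.inter_union_diff W Y
    have hC1disj : Disjoint C1 C2 := by
      have h0 : Disjoint Y (W \ Y) := Set.disjoint_sdiff_right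
      exact h0.mono_left Set.inter_subset_right
    have hS1C1 : S1 ⊆ C1 := Set.subset_inter (hS1W) hS1Y
    have hC1ne : C1.Nonempty := hS1ne.mono hS1C1
    have hC1W : C1 ⊆ W := Set.inter_subset_left
    have hC2W : C2 ⊆ W := Set.diff_subset
    have hC1lam : K.lam C1 ≤ K.lam Y := linked_inter hK hT hW hYT
    have hC1lamW : K.lam C1 ≤ K.lam W := le_trans hC1lam (le_trans hYlam hS1lam)
    have hC1T : C1 ∈ T := tangle_subset_mem hT hWT hC1W (by omega)
    have hC1link : LinkedIn K T C1 := by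
      refine ⟨hC1T, fun Z hZ hsub => ?_⟩
      exact le_trans hC1lam (hmin Z hZ (hS1C1.trans hsub))
    -- lam C2 ≤ lam S2, via the minimality trick
    have hC2eq : C2 = S2 \ Y := by
      rw [hC2def, ← hunion]
      ext x
      simp only [Set.mem_diff, Set.mem_union]
      constructor
      · rintro ⟨hx | hx, hn⟩
        · exact absurd (hS1Y hx) hn
        · exact ⟨hx, hn⟩
      · rintro ⟨hx, hn⟩
        exact ⟨Or.inr hx, hn⟩
    have hC2lamS2 : K.lam C2 ≤ K.lam S2 := by
      have hYE := tangle_subset_E hT hYT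
      have hS2E : S2 ⊆ K.E := hS2W.trans hWE
      set D := Y \ S2 with hDdef
      have hS1D : S1 ⊆ D := fun x hx =>
        ⟨hS1Y hx, fun hxS2 => (Set.disjoint_left.mp hdisj hx) hxS2⟩
      have hDE : D ⊆ K.E := Set.diff_subset.trans hYE
      have hcompl : S2 ∪ (K.E \ Y) = K.E \ D := by
        ext x
        simp only [Set.mem_union, Set.mem_diff]
        constructor
        · rintro (hx | ⟨hxE, hn⟩)
          · exact ⟨hS2E hx, fun hc => hc.2 hx⟩
          · exact ⟨hxE, fun hc => hn hc.1⟩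
        · rintro ⟨hxE, hn⟩
          by_cases hx : x ∈ S2
          · exact Or.inl hx
          · exact Or.inr ⟨hxE, fun hxY => hn ⟨hxY, hx⟩⟩
      have hDlam : K.lam Y ≤ K.lam D := by
        by_cases hDk : K.lam D < k
        · have hDT : D ∈ T := by
            by_contra hDnot
            have hDc : K.E \ D ∈ T := tangle_orient hT hDE hDk hDnot
            refine hT.2.2.1 _ hDc Y hYT Y hYT ?_
            apply Set.eq_of_subset_of_subset
            · exact Set.union_subset (Set.union_subset Set.diff_subset hYE) hYE
            · intro x hxE
              by_cases hxY : x ∈ Y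
              · exact Or.inr hxY
              · exact Or.inl (Or.inl ⟨hxE, fun hc => hxY hc.1⟩)
          exact hmin D hDT hS1D
        · have := tangle_lam_lt hT hYT
          omega
      have hsub := hK.2.2 S2 hS2E (K.E \ Y) Set.diff_subset
      have h1 : S2 ∩ (K.E \ Y) = S2 \ Y := by
        ext x; simp only [Set.mem_inter_iff, Set.mem_diff]
        exact ⟨fun ⟨h, _, hn⟩ => ⟨h, hn⟩, fun ⟨h, hn⟩ => ⟨h, hS2E h, hn⟩⟩
      rw [h1, hcompl, lam_symm hK hYE, lam_symm hK hDE, ← hC2eq] at hsub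
      omega
    have hC2lamW : K.lam C2 ≤ K.lam W := le_trans hC2lamS2 hS2lam
    have hC2T : C2 ∈ T := tangle_subset_mem hT hWT hC2W (by omega)
    have hC2N : C2.ncard ≤ N := Set.ncard_le_ncard (hC2W.trans hWE) hEfin
    have hC1N : C1.ncard ≤ N := Set.ncard_le_ncard (hC1W.trans hWE) hEfin
    -- tree for C1 via IH
    have hmeasC1 : K.lam C1 * (N + 1) + C1.ncard < n := by
      apply lt_of_lt_of_le _ hmeas
      rcases hC1meas with h | h
      · exact meas_lt hC1lamW (Or.inl h) hC1N
      · exact meas_lt hC1lamW (Or.inr h) hC1N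
    obtain ⟨t1, ht1supp, ht1disj, ht1slv, ht1parts⟩ :=
      IH _ hmeasC1 C1 hC1link hC1ne le_rfl
    -- tree for C2
    have hC2ncard : C2.ncard < W.ncard := by
      apply Set.ncard_lt_ncard _ hWfin
      constructor
      · exact hC2W
      · intro hsub
        obtain ⟨x, hx⟩ := hC1ne
        have hx2 : x ∈ C2 := hsub (hC1W hx)
        exact (Set.disjoint_left.mp hC1disj hx) hx2
    have hC2tree : ∃ t : SBT α, t.supp = C2 ∧ t.sdisj ∧ t.slv ∧
        ∀ p ∈ t.parts, K.lam p ≤ K.lam C2 := by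
      by_cases hlinkC2 : ∀ Z ∈ T, C2 ⊆ Z → K.lam C2 ≤ K.lam Z
      · exact IH _ (lt_of_lt_of_le (meas_lt hC2lamW (Or.inr hC2ncard) hC2N) hmeas)
          C2 ⟨hC2T, hlinkC2⟩ hC2ne le_rfl
      · push_neg at hlinkC2
        obtain ⟨Z0, hZ0T, hC2Z0, hZ0lt⟩ := hlinkC2
        obtain ⟨Y2, hY2T, hC2Y2, hY2lam, hY2min⟩ := exists_minlink hT hC2T
        have hY2lt : K.lam Y2 < K.lam C2 := lt_of_le_of_lt (hY2min Z0 hZ0T hC2Z0) hZ0lt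
        have hY2link : LinkedIn K T Y2 := minlink_linked hT hY2T hC2Y2 hY2min
        have hY2ne : Y2.Nonempty := hC2ne.mono hC2Y2
        have hY2N : Y2.ncard ≤ N := Set.ncard_le_ncard (tangle_subset_E hT hY2T) hEfin
        have hmeasY2 : K.lam Y2 * (N + 1) + Y2.ncard < n := by
          apply lt_of_lt_of_le _ hmeas
          exact meas_lt (by omega) (Or.inl (by omega)) hY2N
        obtain ⟨t2', ht2'supp, ht2'disj, ht2'slv, ht2'parts⟩ :=
          IH _ hmeasY2 Y2 hY2link hY2ne le_rfl
        have hsome : ∃ t2, SBT.restr C2 t2' = some t2 := by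
          apply SBT.restr_isSome
          rw [ht2'supp]
          rwa [Set.inter_eq_self_of_subset_right hC2Y2]
        obtain ⟨t2, ht2⟩ := hsome
        obtain ⟨ht2supp, ht2parts, ht2disj, ht2slv⟩ := (SBT.restr_spec C2 t2').2 t2 ht2
        refine ⟨t2, ?_, ht2disj ht2'disj, ht2slv ht2'slv, ?_⟩
        · rw [ht2supp, ht2'supp, Set.inter_eq_self_of_subset_right hC2Y2]
        · intro p hp
          obtain ⟨q, hq, rfl⟩ := ht2parts p hp
          have hqY2 : q ⊆ Y2 := by
            rw [← ht2'supp]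
            exact SBT.parts_subset_supp t2' q hq
          have hqlam : K.lam q ≤ K.lam Y2 := ht2'parts q hq
          have hqT : q ∈ T := tangle_subset_mem hT hY2T hqY2
            (by have := tangle_lam_lt hT hY2T; omega)
          have hqE := tangle_subset_E hT hqT
          have hC2E : C2 ⊆ K.E := (hC2W.trans hWE)
          have hsub := hK.2.2 C2 hC2E q hqE
          have hunionbig : K.lam Y2 ≤ K.lam (C2 ∪ q) := by
            by_cases huk : K.lam (C2 ∪ q) < k
            · exact hY2min _ (tangle_union_mem hT hC2T hqT huk) Set.subset_union_left
            · have := tangle_lam_lt hT hY2T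
              omega
          have : K.lam (C2 ∩ q) ≤ K.lam C2 := by omega
          rwa [Set.inter_comm] at this
    obtain ⟨t2, ht2supp, ht2disj, ht2slv, ht2parts⟩ := hC2tree
    refine ⟨SBT.nd t1 t2, ?_, ⟨?_, ht1disj, ht2disj⟩, ⟨ht1slv, ht2slv⟩, ?_⟩
    · show t1.supp ∪ t2.supp = W
      rw [ht1supp, ht2supp, hC1C2]
    · rw [ht1supp, ht2supp]; exact hC1disj
    · intro p hp
      simp only [SBT.parts, Set.mem_insert_iff, Set.mem_union] at hp
      rcases hp with rfl | hp | hp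
      · rw [ht1supp, ht2supp, hC1C2]
      · exact le_trans (ht1parts p hp) hC1lamW
      · exact le_trans (ht2parts p hp) hC2lamW

end Part4

section Part5

namespace SBT

variable {α : Type*}

/-- the subtree at a position (positions are read head-first). -/
def sub? : SBT α → List Bool → Option (SBT α)
  | t, [] => some t
  | lf _, _ :: _ => none
  | nd l _, false :: p => sub? l p
  | nd _ r, true :: p => sub? r p

@[simp] lemma sub?_nil (t : SBT α) : sub? t [] = some t := by cases t <;> rfl
@[simp] lemma sub?_lf_cons (s : Set α) (d : Bool) (p : List Bool) :
    sub? (lf s) (d :: p) = none := by cases d <;> rfl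
@[simp] lemma sub?_nd_false (l r : SBT α) (p : List Bool) :
    sub? (nd l r) (false :: p) = sub? l p := rfl
@[simp] lemma sub?_nd_true (l r : SBT α) (p : List Bool) :
    sub? (nd l r) (true :: p) = sub? r p := rfl

lemma sub?_append : ∀ (p : List Bool) (t : SBT α) (q : List Bool),
    sub? t (p ++ q) = (sub? t p).bind (fun s => sub? s q)
  | [], t, q => by simp
  | d :: p, lf s, q => by simp
  | false :: p, nd l r, q => by simp [sub?_append p l q]
  | true :: p, nd l r, q => by simp [sub?_append p r q]

lemma sub?_supp_subset : ∀ (p : List Bool) (t : SBT α) {s : SBT α},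
    sub? t p = some s → s.supp ⊆ t.supp
  | [], t, s => by simp; rintro rfl; exact subset_refl _
  | d :: p, lf u, s => by simp
  | false :: p, nd l r, s => fun h => by
    have := sub?_supp_subset p l (s := s) (by simpa using h)
    exact this.trans Set.subset_union_left
  | true :: p, nd l r, s => fun h => by
    have := sub?_supp_subset p r (s := s) (by simpa using h)
    exact this.trans Set.subset_union_right

lemma sub?_supp_mem_parts : ∀ (p : List Bool) (t : SBT α) {s : SBT α},
    sub? t p = some s → s.supp ∈ t.parts
  | [], t, s => by simp; rintro rfl; exact supp_mem_parts t
  | d :: p, lf u, s => by simp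
  | false :: p, nd l r, s => fun h => by
    have := sub?_supp_mem_parts p l (s := s) (by simpa using h)
    simp only [parts, Set.mem_insert_iff, Set.mem_union]
    exact Or.inr (Or.inl this)
  | true :: p, nd l r, s => fun h => by
    have := sub?_supp_mem_parts p r (s := s) (by simpa using h)
    simp only [parts, Set.mem_insert_iff, Set.mem_union]
    exact Or.inr (Or.inr this)

/-- list of valid positions -/
def posL : SBT α → List (List Bool)
  | lf _ => [[]]
  | nd l r => [] :: ((posL l).map (List.cons false) ++ (posL r).map (List.cons true))

lemma mem_posL : ∀ (t : SBT α) (p : List Bool), p ∈ posL t ↔ (sub? t p).isSome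
  | lf s, p => by
    cases p with
    | nil => simp [posL]
    | cons d q => simp [posL]
  | nd l r, p => by
    cases p with
    | nil => simp [posL]
    | cons d q =>
      cases d
      · simp only [posL, List.mem_cons, List.mem_append, List.mem_map, sub?_nd_false]
        rw [← mem_posL l q]
        constructor
        · rintro (h | ⟨⟨x, hx, hxe⟩ | ⟨x, hx, hxe⟩⟩)
          · exact absurd h (by simp)
          · obtain ⟨rfl⟩ : x = q := by injection hxe
            exact hx
          · injection hxe with h1 _
            exact absurd h1 (by simp)
        · intro h
          exact Or.inr (Or.inl ⟨q, h, rfl⟩)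
      · simp only [posL, List.mem_cons, List.mem_append, List.mem_map, sub?_nd_true]
        rw [← mem_posL r q]
        constructor
        · rintro (h | ⟨⟨x, hx, hxe⟩ | ⟨x, hx, hxe⟩⟩)
          · exact absurd h (by simp)
          · injection hxe with h1 _
            exact absurd h1 (by simp)
          · obtain ⟨rfl⟩ : x = q := by injection hxe
            exact hx
        · intro h
          exact Or.inr (Or.inr ⟨q, h, rfl⟩)

lemma sub?_prefix_isSome {t : SBT α} {p q : List Bool} (hpq : p <+: q)
    (h : (sub? t q).isSome) : (sub? t p).isSome := by
  obtain ⟨u, rfl⟩ := hpq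
  rw [sub?_append] at h
  rcases hp : sub? t p with _ | s
  · rw [hp] at h; simp at h
  · simp

end SBT

end Part5

section Part6

variable {α : Type*}

/-- valid nonempty positions -/
noncomputable def PosV (t0 : SBT α) : Finset (List Bool) :=
  (SBT.posL t0).toFinset.erase []

lemma mem_PosV {t0 : SBT α} {p : List Bool} :
    p ∈ PosV t0 ↔ p ≠ [] ∧ (SBT.sub? t0 p).isSome := by
  simp [PosV, SBT.mem_posL]

def stepT (p q : List Bool) : Prop :=
  (∃ d, q = p ++ [d]) ∨ (p = [false] ∧ q = [true])

/-- the cubic tree of the decomposition -/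
def TGraph (t0 : SBT α) : SimpleGraph {p : List Bool // p ∈ PosV t0} where
  Adj u v := stepT u.1 v.1 ∨ stepT v.1 u.1
  symm := by
    constructor
    intro u v h
    unfold stepT at *
    tauto
  loopless := by
    constructor
    rintro u (⟨⟨d, hd⟩ | ⟨h1, h2⟩⟩ | ⟨⟨d, hd⟩ | ⟨h1, h2⟩⟩) <;>
      first
        | (have := congrArg List.length hd; simp at this)
        | (rw [h1] at h2; simp at h2)

variable {t0 : SBT α}

lemma posv_ne (x : {p : List Bool // p ∈ PosV t0}) : x.1 ≠ [] := (mem_PosV.mp x.2).1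

lemma posv_isSome (x : {p : List Bool // p ∈ PosV t0}) : (SBT.sub? t0 x.1).isSome :=
  (mem_PosV.mp x.2).2

lemma prefix_mem_PosV {p q : List Bool} (hpq : p <+: q) (hp : p ≠ [])
    (hq : q ∈ PosV t0) : p ∈ PosV t0 :=
  mem_PosV.mpr ⟨hp, SBT.sub?_prefix_isSome hpq (mem_PosV.mp hq).2⟩

lemma take1_mem_PosV {q : List Bool} (hq : q ∈ PosV t0) : q.take 1 ∈ PosV t0 := by
  obtain ⟨b, rest, hb⟩ := List.exists_cons_of_ne_nil (mem_PosV.mp hq).1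
  apply prefix_mem_PosV (List.take_prefix 1 q) _ hq
  rw [hb]
  simp

lemma adj_parent_child {q : List Bool} {d : Bool} (h1 : q ∈ PosV t0)
    (h2 : q ++ [d] ∈ PosV t0) :
    (TGraph t0).Adj ⟨q, h1⟩ ⟨q ++ [d], h2⟩ :=
  Or.inl (Or.inl ⟨d, rfl⟩)

lemma del_adj {e : Sym2 {p : List Bool // p ∈ PosV t0}}
    {x y : {p : List Bool // p ∈ PosV t0}} (h1 : (TGraph t0).Adj x y)
    (h2 : s(x, y) ≠ e) : ((TGraph t0).deleteEdges {e}).Adj x y :=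
  SimpleGraph.deleteEdges_adj.mpr ⟨h1, by simpa using h2⟩

/-- walking up to depth 1, avoiding the deleted edge when it is not above us -/
lemma chain_up (e : Sym2 {p : List Bool // p ∈ PosV t0}) :
    ∀ (n : ℕ) (x : {p : List Bool // p ∈ PosV t0}), x.1.length ≤ n →
    (∀ (q : List Bool) (d : Bool) (h1 : q ∈ PosV t0) (h2 : q ++ [d] ∈ PosV t0),
      q ++ [d] <+: x.1 → s(⟨q, h1⟩, ⟨q ++ [d], h2⟩) ≠ e) →
    ((TGraph t0).deleteEdges {e}).Reachable x ⟨x.1.take 1, take1_mem_PosV x.2⟩ := by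
  intro n
  induction n with
  | zero =>
    intro x hlen _
    exact absurd (List.length_eq_zero_iff.mp (Nat.le_zero.mp hlen)) (posv_ne x)
  | succ n IH =>
    intro x hlen hsafe
    rcases List.eq_nil_or_concat' x.1 with hnil | ⟨q, d, hqd⟩
    · exact absurd hnil (posv_ne x)
    · by_cases hq : q = []
      · subst hq
        have htake : x.1.take 1 = x.1 := by rw [hqd]; simp
        have hvx : (⟨x.1.take 1, take1_mem_PosV x.2⟩ : {p : List Bool // p ∈ PosV t0}) = x :=
          Subtype.ext htake
        rw [hvx]
      · have hqmem : q ∈ PosV t0 :=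
          prefix_mem_PosV (by rw [hqd]; exact ⟨[d], rfl⟩) hq x.2
        have hxmem : q ++ [d] ∈ PosV t0 := by rw [← hqd]; exact x.2
        have hadj : ((TGraph t0).deleteEdges {e}).Adj x ⟨q, hqmem⟩ := by
          apply del_adj
          · right
            exact Or.inl ⟨d, by rw [hqd]⟩
          · have hx : x = ⟨q ++ [d], hxmem⟩ := Subtype.ext hqd
            rw [hx, Sym2.eq_swap]
            exact hsafe q d hqmem hxmem (by rw [hqd])
        have hlq : x.1.length = q.length + 1 := by rw [hqd]; simp
        have hqlen : q.length ≤ n := by omega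
        have hsafe' : ∀ (q' : List Bool) (d' : Bool) (h1 : q' ∈ PosV t0)
            (h2 : q' ++ [d'] ∈ PosV t0), q' ++ [d'] <+: q →
            s(⟨q', h1⟩, ⟨q' ++ [d'], h2⟩) ≠ e := by
          intro q' d' h1 h2 hpre
          exact hsafe q' d' h1 h2 (hpre.trans (by rw [hqd]; exact ⟨[d], rfl⟩))
        have hreach := IH ⟨q, hqmem⟩ hqlen hsafe'
        have htake : q.take 1 = x.1.take 1 := by
          rw [hqd, List.take_append_of_le_length]
          obtain ⟨b, rest, hb⟩ := List.exists_cons_of_ne_nil hq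
          rw [hb]; simp
        have hvx : (⟨q.take 1, take1_mem_PosV hqmem⟩ : {p : List Bool // p ∈ PosV t0}) =
            ⟨x.1.take 1, take1_mem_PosV x.2⟩ := Subtype.ext htake
        exact (hadj.reachable).trans (hvx ▸ hreach)

/-- walking down to the top of the deleted edge's lower side -/
lemma reach_down (e : Sym2 {p : List Bool // p ∈ PosV t0}) (c : List Bool)
    (hcV : c ∈ PosV t0)
    (hsafe : ∀ (q : List Bool) (d : Bool) (h1 : q ∈ PosV t0) (h2 : q ++ [d] ∈ PosV t0),
      c <+: q → s(⟨q, h1⟩, ⟨q ++ [d], h2⟩) ≠ e) :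
    ∀ (n : ℕ) (x : {p : List Bool // p ∈ PosV t0}), x.1.length ≤ n → c <+: x.1 →
    ((TGraph t0).deleteEdges {e}).Reachable x ⟨c, hcV⟩ := by
  intro n
  induction n with
  | zero =>
    intro x hlen _
    exact absurd (List.length_eq_zero_iff.mp (Nat.le_zero.mp hlen)) (posv_ne x)
  | succ n IH =>
    intro x hlen hpre
    by_cases hxc : x.1 = c
    · have hvx : x = (⟨c, hcV⟩ : {p : List Bool // p ∈ PosV t0}) := Subtype.ext hxc
      rw [hvx]
    · rcases List.eq_nil_or_concat' x.1 with hnil | ⟨q, d, hqd⟩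
      · exact absurd hnil (posv_ne x)
      · have hclen : c.length < x.1.length := by
          rcases Nat.lt_or_ge c.length x.1.length with h | h
          · exact h
          · exact absurd (hpre.eq_of_length_le h).symm hxc
        have hlq : x.1.length = q.length + 1 := by rw [hqd]; simp
        have hcq : c <+: q := by
          apply List.prefix_of_prefix_length_le hpre (by rw [hqd]; exact ⟨[d], rfl⟩)
          omega
        have hq : q ≠ [] := by
          intro h
          rw [h] at hcq
          exact (mem_PosV.mp hcV).1 (List.prefix_nil.mp hcq)
        have hqmem : q ∈ PosV t0 :=
          prefix_mem_PosV (by rw [hqd]; exact ⟨[d], rfl⟩) hq x.2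
        have hxmem : q ++ [d] ∈ PosV t0 := by rw [← hqd]; exact x.2
        have hadj : ((TGraph t0).deleteEdges {e}).Adj x ⟨q, hqmem⟩ := by
          apply del_adj
          · right
            exact Or.inl ⟨d, by rw [hqd]⟩
          · have hx : x = ⟨q ++ [d], hxmem⟩ := Subtype.ext hqd
            rw [hx, Sym2.eq_swap]
            exact hsafe q d hqmem hxmem hcq
        have hqlen : q.length ≤ n := by omega
        exact (hadj.reachable).trans (IH ⟨q, hqmem⟩ hqlen hcq)

end Part6

section Part7

variable {α : Type*} {t0 : SBT α}

/-- description of the deleted edge together with its lower end `c` -/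
def EdgeData (t0 : SBT α) (e : Sym2 {p : List Bool // p ∈ PosV t0}) (c : List Bool) : Prop :=
  (c = [true] ∧ ∃ (h1 : [false] ∈ PosV t0) (h2 : [true] ∈ PosV t0),
      e = s(⟨[false], h1⟩, ⟨[true], h2⟩)) ∨
  (∃ (p : List Bool) (d : Bool) (h1 : p ∈ PosV t0) (h2 : p ++ [d] ∈ PosV t0),
      p ≠ [] ∧ c = p ++ [d] ∧ e = s(⟨p, h1⟩, ⟨p ++ [d], h2⟩))

lemma cross_adj {e : Sym2 {p : List Bool // p ∈ PosV t0}} {c : List Bool}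
    (hE : EdgeData t0 e c) (x y : {p : List Bool // p ∈ PosV t0})
    (hadj : ((TGraph t0).deleteEdges {e}).Adj x y) : (c <+: x.1 ↔ c <+: y.1) := by
  obtain ⟨hG, hne'⟩ := SimpleGraph.deleteEdges_adj.mp hadj
  have hne : s(x, y) ≠ e := by simpa using hne'
  have key : ∀ x y : {p : List Bool // p ∈ PosV t0}, stepT x.1 y.1 → s(x, y) ≠ e →
      (c <+: x.1 ↔ c <+: y.1) := by
    intro x y hstep hnee
    rcases hstep with ⟨d', hd'⟩ | ⟨hx, hy⟩
    · rw [hd', List.prefix_concat_iff]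
      constructor
      · exact Or.inr
      · rintro (hceq | h)
        · exfalso
          rcases hE with ⟨hc, h1, h2, he⟩ | ⟨p, d, h1, h2, hpne, hceq2, he⟩
          · rw [hc] at hceq
            rcases List.exists_cons_of_ne_nil (posv_ne x) with ⟨b, rest, hb⟩
            rw [hb] at hceq
            simp at hceq
          · rw [hceq2] at hceq
            obtain ⟨hpx, hdd⟩ := List.append_inj' hceq rfl
            apply hnee
            rw [he]
            have hxp : x = ⟨p, h1⟩ := Subtype.ext hpx.symm
            have hyc : y = ⟨p ++ [d], h2⟩ := by
              apply Subtype.ext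
              show y.1 = p ++ [d]
              injection hdd with h _
              rw [hd', ← hpx, h]
            rw [hxp, hyc]
        · exact h
    · rcases hE with ⟨hc, h1, h2, he⟩ | ⟨p, d, h1, h2, hpne, hceq, he⟩
      · exfalso
        apply hnee
        rw [he]
        have hxp : x = ⟨[false], h1⟩ := Subtype.ext hx
        have hyc : y = ⟨[true], h2⟩ := Subtype.ext hy
        rw [hxp, hyc]
      · have hclen : 2 ≤ c.length := by
          rw [hceq]
          have : 1 ≤ p.length := by
            rcases List.exists_cons_of_ne_nil hpne with ⟨b, rest, hb⟩
            rw [hb]; simp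
          simp
          omega
        constructor
        · intro h
          exfalso
          have := h.length_le
          rw [hx] at this
          simp at this
          omega
        · intro h
          exfalso
          have := h.length_le
          rw [hy] at this
          simp at this
          omega
  rcases hG with h | h
  · exact key x y h hne
  · exact (key y x h (by rw [Sym2.eq_swap]; exact hne)).symm

lemma cross_reach {e : Sym2 {p : List Bool // p ∈ PosV t0}} {c : List Bool}
    (hE : EdgeData t0 e c) {x y : {p : List Bool // p ∈ PosV t0}}
    (h : ((TGraph t0).deleteEdges {e}).Reachable x y) : (c <+: x.1 ↔ c <+: y.1) := by
  obtain ⟨w⟩ := h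
  induction w with
  | nil => exact Iff.rfl
  | cons hadj w ih => exact (cross_adj hE _ _ hadj).trans ih

lemma sym2_ne_of_len {a b x y : {p : List Bool // p ∈ PosV t0}}
    (h : ∀ z : {p : List Bool // p ∈ PosV t0}, z.1.length = x.1.length → z.1.length = y.1.length →
      False) : True := trivial

/-- Type A edge: from `p` to `p ++ [d]`. Characterize reachability in the cut graph. -/
lemma reach_typeA {p : List Bool} {d : Bool} (h1 : p ∈ PosV t0) (h2 : p ++ [d] ∈ PosV t0)
    (hp : p ≠ []) (x : {p : List Bool // p ∈ PosV t0}) :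
    (((TGraph t0).deleteEdges {s(⟨p, h1⟩, ⟨p ++ [d], h2⟩)}).Reachable x ⟨p ++ [d], h2⟩ ↔
      (p ++ [d]) <+: x.1) ∧
    (((TGraph t0).deleteEdges {s(⟨p, h1⟩, ⟨p ++ [d], h2⟩)}).Reachable x ⟨p, h1⟩ ↔
      ¬ (p ++ [d]) <+: x.1) := by
  set c := p ++ [d] with hcdef
  set e := s((⟨p, h1⟩ : {p : List Bool // p ∈ PosV t0}), ⟨p ++ [d], h2⟩) with hedef
  have hE : EdgeData t0 e c := Or.inr ⟨p, d, h1, h2, hp, rfl, rfl⟩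
  have hplen : 1 ≤ p.length := by
    rcases List.exists_cons_of_ne_nil hp with ⟨b, rest, hb⟩
    rw [hb]; simp
  have hclen : c.length = p.length + 1 := by rw [hcdef]; simp
  have hcp : ¬ c <+: p := by
    intro h
    have := h.length_le
    omega
  constructor
  · constructor
    · intro h
      have := cross_reach hE h
      exact this.mpr List.prefix_rfl
    · intro hpre
      apply reach_down e c h2 _ x.1.length x le_rfl hpre
      intro q d' hq1 hq2 hcq heq
      rw [hedef] at heq
      rcases Sym2.eq_iff.mp heq with ⟨ha, hb⟩ | ⟨ha, hb⟩
      · have hqp : q = p := congrArg Subtype.val ha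
        rw [hqp] at hcq
        exact hcp hcq
      · have hqc : q = c := congrArg Subtype.val ha
        have hqp : q ++ [d'] = p := congrArg Subtype.val hb
        have := congrArg List.length hqp
        rw [hqc] at this
        simp at this
        omega
  · constructor
    · intro h
      have := cross_reach hE h
      exact fun hc => hcp (this.mp hc)
    · intro hnpre
      -- climb from x to depth 1
      have hsafex : ∀ (q : List Bool) (d' : Bool) (hq1 : q ∈ PosV t0)
          (hq2 : q ++ [d'] ∈ PosV t0), q ++ [d'] <+: x.1 →
          s(⟨q, hq1⟩, ⟨q ++ [d'], hq2⟩) ≠ e := by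
        intro q d' hq1 hq2 hpre heq
        rw [hedef] at heq
        rcases Sym2.eq_iff.mp heq with ⟨ha, hb⟩ | ⟨ha, hb⟩
        · have : q ++ [d'] = c := congrArg Subtype.val hb
          rw [this] at hpre
          exact hnpre hpre
        · have hqc : q = c := congrArg Subtype.val ha
          apply hnpre
          refine List.IsPrefix.trans ?_ hpre
          rw [hqc]
          exact ⟨[d'], rfl⟩
      have hsafep : ∀ (q : List Bool) (d' : Bool) (hq1 : q ∈ PosV t0)
          (hq2 : q ++ [d'] ∈ PosV t0), q ++ [d'] <+: p →
          s(⟨q, hq1⟩, ⟨q ++ [d'], hq2⟩) ≠ e := by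
        intro q d' hq1 hq2 hpre heq
        rw [hedef] at heq
        rcases Sym2.eq_iff.mp heq with ⟨ha, hb⟩ | ⟨ha, hb⟩
        · have : q ++ [d'] = c := congrArg Subtype.val hb
          rw [this] at hpre
          exact hcp hpre
        · have hqc : q = c := congrArg Subtype.val ha
          apply hcp
          refine List.IsPrefix.trans ?_ hpre
          rw [hqc]
          exact ⟨[d'], rfl⟩
      have hchx := chain_up e x.1.length x le_rfl hsafex
      have hchp := chain_up e p.length ⟨p, h1⟩ le_rfl hsafep
      obtain ⟨bx, restx, hbx⟩ := List.exists_cons_of_ne_nil (posv_ne x)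
      obtain ⟨bp, restp, hbp⟩ := List.exists_cons_of_ne_nil hp
      have htx : x.1.take 1 = [bx] := by rw [hbx]; simp
      have htp : p.take 1 = [bp] := by rw [hbp]; simp
      by_cases hbb : bx = bp
      · refine hchx.trans ?_
        rw [show (⟨x.1.take 1, take1_mem_PosV x.2⟩ : {p : List Bool // p ∈ PosV t0}) =
            ⟨p.take 1, take1_mem_PosV h1⟩ from Subtype.ext (show List.take 1 x.1 = List.take 1 p by rw [htx, htp, hbb])]
        exact hchp.symm
      · have hm1 : x.1.take 1 ∈ PosV t0 := take1_mem_PosV x.2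
        have hm2 : p.take 1 ∈ PosV t0 := take1_mem_PosV h1
        have hhop : ((TGraph t0).deleteEdges {e}).Adj ⟨x.1.take 1, hm1⟩ ⟨p.take 1, hm2⟩ := by
          apply del_adj
          · show stepT (x.1.take 1) (p.take 1) ∨ stepT (p.take 1) (x.1.take 1)
            rw [htx, htp]
            cases bx <;> cases bp
            · exact absurd rfl hbb
            · exact Or.inl (Or.inr ⟨rfl, rfl⟩)
            · exact Or.inr (Or.inr ⟨rfl, rfl⟩)
            · exact absurd rfl hbb
          · intro heq
            rw [hedef] at heq
            rcases Sym2.eq_iff.mp heq with ⟨ha, hb⟩ | ⟨ha, hb⟩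
            · have hthis : p.take 1 = c := congrArg Subtype.val hb
              have hl : (p.take 1).length ≤ 1 := by
                rw [List.length_take]; omega
              rw [hthis] at hl
              omega
            · have hthis : x.1.take 1 = c := congrArg Subtype.val ha
              have hl : (x.1.take 1).length ≤ 1 := by
                rw [List.length_take]; omega
              rw [hthis] at hl
              omega
        refine hchx.trans (hhop.reachable.trans ?_)
        exact hchp.symm

/-- Type B edge: the root edge between `[false]` and `[true]`. -/
lemma reach_typeB (h1 : [false] ∈ PosV t0) (h2 : [true] ∈ PosV t0)
    (x : {p : List Bool // p ∈ PosV t0}) :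
    (((TGraph t0).deleteEdges {s(⟨[false], h1⟩, ⟨[true], h2⟩)}).Reachable x ⟨[true], h2⟩ ↔
      [true] <+: x.1) ∧
    (((TGraph t0).deleteEdges {s(⟨[false], h1⟩, ⟨[true], h2⟩)}).Reachable x ⟨[false], h1⟩ ↔
      ¬ [true] <+: x.1) := by
  set e := s((⟨[false], h1⟩ : {p : List Bool // p ∈ PosV t0}), ⟨[true], h2⟩) with hedef
  have hE : EdgeData t0 e [true] := Or.inl ⟨rfl, h1, h2, rfl⟩
  have hsafe : ∀ (q : List Bool) (d' : Bool) (hq1 : q ∈ PosV t0)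
      (hq2 : q ++ [d'] ∈ PosV t0), s(⟨q, hq1⟩, ⟨q ++ [d'], hq2⟩) ≠ e := by
    intro q d' hq1 hq2 heq
    rw [hedef] at heq
    obtain ⟨b, rest, hb⟩ := List.exists_cons_of_ne_nil (show q ≠ [] from (mem_PosV.mp hq1).1)
    rcases Sym2.eq_iff.mp heq with ⟨ha, hb'⟩ | ⟨ha, hb'⟩
    · have hv : q ++ [d'] = [true] := congrArg Subtype.val hb'
      have hl := congrArg List.length hv
      rw [hb] at hl
      simp at hl
    · have hv : q ++ [d'] = [false] := congrArg Subtype.val hb'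
      have hl := congrArg List.length hv
      rw [hb] at hl
      simp at hl
  constructor
  · constructor
    · intro h
      have := cross_reach hE h
      exact this.mpr List.prefix_rfl
    · intro hpre
      exact reach_down e [true] h2 (fun q d' hq1 hq2 _ => hsafe q d' hq1 hq2)
        x.1.length x le_rfl hpre
  · constructor
    · intro h
      have hiff := cross_reach hE h
      intro hcon
      have heq2 := (hiff.mp hcon).eq_of_length (by simp)
      simp at heq2
    · intro hnpre
      have hchx := chain_up e x.1.length x le_rfl
        (fun q d' hq1 hq2 _ => hsafe q d' hq1 hq2)
      obtain ⟨bx, restx, hbx⟩ := List.exists_cons_of_ne_nil (posv_ne x)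
      have htx : x.1.take 1 = [bx] := by rw [hbx]; simp
      have hbxf : bx = false := by
        by_contra hbt
        have hbt' : bx = true := by cases bx <;> simp_all
        apply hnpre
        have hpx : x.1.take 1 <+: x.1 := List.take_prefix 1 x.1
        rw [htx, hbt'] at hpx
        exact hpx
      rw [show (⟨[false], h1⟩ : {p : List Bool // p ∈ PosV t0}) =
          ⟨x.1.take 1, take1_mem_PosV x.2⟩ from Subtype.ext (show ([false] : List Bool) = List.take 1 x.1 by rw [htx, hbxf])]
      exact hchx

end Part7

section Part8

namespace SBT

variable {α : Type*}

open Classical in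
noncomputable def leafPos : SBT α → α → Option (List Bool)
  | lf s, a => if a ∈ s then some [] else none
  | nd l r, a =>
    match leafPos l a with
    | some p => some (false :: p)
    | none => (leafPos r a).map (List.cons true)

lemma leafPos_spec : ∀ (t : SBT α) (a : α) (p : List Bool), leafPos t a = some p →
    ∃ s, sub? t p = some (lf s) ∧ a ∈ s
  | lf s, a, p => by
    intro h
    by_cases ha : a ∈ s
    · simp only [leafPos, if_pos ha, Option.some.injEq] at h
      subst h
      exact ⟨s, by simp, ha⟩
    · simp [leafPos, if_neg ha] at h
  | nd l r, a, p => by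
    intro h
    rcases hl : leafPos l a with _ | q
    · rcases hr : leafPos r a with _ | q
      · simp [leafPos, hl, hr] at h
      · simp only [leafPos, hl, hr, Option.map_some, Option.some.injEq] at h
        subst h
        obtain ⟨s, hs, ha⟩ := leafPos_spec r a q hr
        exact ⟨s, by simpa using hs, ha⟩
    · simp only [leafPos, hl, Option.some.injEq] at h
      subst h
      obtain ⟨s, hs, ha⟩ := leafPos_spec l a q hl
      exact ⟨s, by simpa using hs, ha⟩

lemma leafPos_isSome_iff : ∀ (t : SBT α) (a : α), (leafPos t a).isSome ↔ a ∈ t.supp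
  | lf s, a => by
    by_cases ha : a ∈ s <;> simp [leafPos, ha, supp]
  | nd l r, a => by
    rcases hl : leafPos l a with _ | q
    · rcases hr : leafPos r a with _ | q
      · simp only [leafPos, hl, hr, Option.map_none, Option.isSome_none, supp,
          Set.mem_union, Bool.false_eq_true, false_iff]
        rintro (h | h)
        · have := (leafPos_isSome_iff l a).mpr h
          rw [hl] at this; simp at this
        · have := (leafPos_isSome_iff r a).mpr h
          rw [hr] at this; simp at this
      · have har : a ∈ r.supp := by
          have := (leafPos_isSome_iff r a).mp (by rw [hr]; simp)
          exact this
        simp [leafPos, hl, hr, supp, har]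
    · have hal : a ∈ l.supp := by
        have := (leafPos_isSome_iff l a).mp (by rw [hl]; simp)
        exact this
      simp [leafPos, hl, supp, hal]

lemma leafPos_unique : ∀ (t : SBT α), t.sdisj → ∀ (p : List Bool) (s : Set α) (a : α),
    sub? t p = some (lf s) → a ∈ s → leafPos t a = some p
  | lf s0, _, p, s, a => by
    intro hsub ha
    cases p with
    | nil =>
      simp only [sub?_nil, Option.some.injEq] at hsub
      injection hsub with h
      subst h
      simp [leafPos, ha]
    | cons d q => simp at hsub
  | nd l r, hdisj, p, s, a => by
    intro hsub ha
    cases p with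
    | nil =>
      simp only [sub?_nil, Option.some.injEq] at hsub
      exact absurd hsub (by simp)
    | cons d q =>
      cases d
      · simp only [sub?_nd_false] at hsub
        have hal : a ∈ l.supp := by
          have := sub?_supp_subset q l hsub
          exact this (by simpa [supp] using ha)
        have := leafPos_unique l hdisj.2.1 q s a hsub ha
        simp [leafPos, this]
      · simp only [sub?_nd_true] at hsub
        have har : a ∈ r.supp := by
          have := sub?_supp_subset q r hsub
          exact this (by simpa [supp] using ha)
        have hnl : a ∉ l.supp := fun hc => (Set.disjoint_left.mp hdisj.1 hc) har
        have hlnone : leafPos l a = none := by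
          rcases hl : leafPos l a with _ | q'
          · rfl
          · exact absurd ((leafPos_isSome_iff l a).mp (by rw [hl]; simp)) hnl
        have := leafPos_unique r hdisj.2.2 q s a hsub ha
        simp [leafPos, hlnone, this]

end SBT

end Part8

section Part8b

namespace SBT

variable {α : Type*}

lemma leafPos_prefix_iff : ∀ (c : List Bool) (t : SBT α), t.sdisj →
    ∀ {s' : SBT α}, sub? t c = some s' → ∀ {a : α} {p : List Bool},
    leafPos t a = some p → ((c <+: p) ↔ a ∈ s'.supp)
  | [], t, hdisj, s', hsub, a, p, hlp => by
    simp only [sub?_nil, Option.some.injEq] at hsub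
    subst hsub
    constructor
    · intro _
      exact (leafPos_isSome_iff t a).mp (by rw [hlp]; simp)
    · intro _
      exact List.nil_prefix
  | d :: c', lf s0, hdisj, s', hsub, a, p, hlp => by
    simp at hsub
  | false :: c', nd l r, hdisj, s', hsub, a, p, hlp => by
    simp only [sub?_nd_false] at hsub
    rcases hl : leafPos l a with _ | q
    · rcases hr : leafPos r a with _ | q'
      · simp [leafPos, hl, hr] at hlp
      · simp only [leafPos, hl, hr, Option.map_some, Option.some.injEq] at hlp
        subst hlp
        constructor
        · intro hpre
          exact absurd (List.cons_prefix_cons.mp hpre).1 (by simp)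
        · intro ha
          exfalso
          have hal : a ∈ l.supp := sub?_supp_subset c' l hsub ha
          have := (leafPos_isSome_iff l a).mpr hal
          rw [hl] at this
          simp at this
    · simp only [leafPos, hl, Option.some.injEq] at hlp
      subst hlp
      rw [List.cons_prefix_cons]
      have hiff := leafPos_prefix_iff c' l hdisj.2.1 hsub hl
      simp [hiff]
  | true :: c', nd l r, hdisj, s', hsub, a, p, hlp => by
    simp only [sub?_nd_true] at hsub
    rcases hl : leafPos l a with _ | q
    · rcases hr : leafPos r a with _ | q'
      · simp [leafPos, hl, hr] at hlp
      · simp only [leafPos, hl, hr, Option.map_some, Option.some.injEq] at hlp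
        subst hlp
        rw [List.cons_prefix_cons]
        have hiff := leafPos_prefix_iff c' r hdisj.2.2 hsub hr
        simp [hiff]
    · simp only [leafPos, hl, Option.some.injEq] at hlp
      subst hlp
      constructor
      · intro hpre
        exact absurd (List.cons_prefix_cons.mp hpre).1 (by simp)
      · intro ha
        exfalso
        have har : a ∈ r.supp := sub?_supp_subset c' r hsub ha
        have hal : a ∈ l.supp := (leafPos_isSome_iff l a).mp (by rw [hl]; simp)
        exact (Set.disjoint_left.mp hdisj.1 hal) har

lemma leafPos_nd_ne_nil {l r : SBT α} {a : α} {p : List Bool}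
    (h : leafPos (nd l r) a = some p) : p ≠ [] := by
  rcases hl : leafPos l a with _ | q
  · rcases hr : leafPos r a with _ | q'
    · simp [leafPos, hl, hr] at h
    · simp only [leafPos, hl, hr, Option.map_some, Option.some.injEq] at h
      subst h
      simp
  · simp only [leafPos, hl, Option.some.injEq] at h
    subst h
    simp

end SBT

end Part8b

section Part8c

namespace SBT

variable {α : Type*}

lemma slv_at : ∀ (p : List Bool) (t : SBT α), t.slv → ∀ {s : Set α},
    sub? t p = some (lf s) → (s = ∅ ∨ ∃ e, s = {e})
  | [], lf s0, hslv, s, h => by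
    simp only [sub?_nil, Option.some.injEq] at h
    injection h with h2
    subst h2
    exact hslv
  | [], nd l r, hslv, s, h => by
    simp only [sub?_nil, Option.some.injEq] at h
    exact absurd h (by simp)
  | d :: p, lf s0, hslv, s, h => by simp at h
  | false :: p, nd l r, hslv, s, h => slv_at p l hslv.1 (by simpa using h)
  | true :: p, nd l r, hslv, s, h => slv_at p r hslv.2 (by simpa using h)

end SBT

end Part8c

section Part9

variable {α : Type*}

lemma branched_of_tree (K : PreSys α) (hK : K.IsConnSys) (X : Set α) (hXE : X ⊆ K.E)
    (tX : SBT α) (hsupp : tX.supp = X) (hdisjX : tX.sdisj) (hslvX : tX.slv)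
    (hpartsX : ∀ p ∈ tX.parts, K.lam p ≤ K.lam X) :
    Branched K X (K.lam X) := by
  classical
  set J : Set α := K.E \ X with hJdef
  set t0 : SBT α := SBT.nd (SBT.lf J) tX with ht0def
  have ht0disj : t0.sdisj := by
    refine ⟨?_, trivial, hdisjX⟩
    show Disjoint (K.E \ X) tX.supp
    rw [hsupp]
    exact disjoint_sdiff_left
  have ht0supp : t0.supp = K.E := by
    show J ∪ tX.supp = K.E
    rw [hsupp, hJdef]
    exact Set.diff_union_of_subset hXE
  have hsubF : SBT.sub? t0 [false] = some (SBT.lf J) := by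
    rw [ht0def, show ([false] : List Bool) = false :: [] from rfl, SBT.sub?_nd_false,
      SBT.sub?_nil]
  have hsubT : SBT.sub? t0 [true] = some tX := by
    rw [ht0def, show ([true] : List Bool) = true :: [] from rfl, SBT.sub?_nd_true,
      SBT.sub?_nil]
  have hF : [false] ∈ PosV t0 := mem_PosV.mpr ⟨by simp, by rw [hsubF]; simp⟩
  have hTmem : [true] ∈ PosV t0 := mem_PosV.mpr ⟨by simp, by rw [hsubT]; simp⟩
  -- bound on the supports of subtrees
  have hpartbound : ∀ {c : List Bool} {s' : SBT α}, SBT.sub? t0 c = some s' →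
      K.lam s'.supp ≤ K.lam X ∧ s'.supp ⊆ K.E := by
    intro c s' hsub
    have hmem := SBT.sub?_supp_mem_parts c t0 hsub
    have hsub2 : s'.supp ⊆ K.E := by
      rw [← ht0supp]; exact SBT.sub?_supp_subset c t0 hsub
    refine ⟨?_, hsub2⟩
    rw [ht0def] at hmem
    simp only [SBT.parts, Set.mem_insert_iff, Set.mem_union, Set.mem_singleton_iff] at hmem
    rcases hmem with h | h | h
    · rw [h]
      have : (SBT.lf J).supp ∪ tX.supp = K.E := ht0supp
      rw [this, lamE_eq hK]
      exact lam_empty_le hK hXE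
    · rw [h]
      show K.lam (K.E \ X) ≤ K.lam X
      rw [lam_symm hK hXE]
    · exact hpartsX _ h
  -- the map f
  have hmemget : ∀ (a : α) (h : (SBT.leafPos t0 a).isSome),
      (SBT.leafPos t0 a).get h ∈ PosV t0 := by
    intro a h
    rw [mem_PosV]
    have heq : SBT.leafPos t0 a = some ((SBT.leafPos t0 a).get h) := (Option.some_get h).symm
    constructor
    · exact SBT.leafPos_nd_ne_nil heq
    · obtain ⟨s, hs, _⟩ := SBT.leafPos_spec t0 a _ heq
      rw [hs]
      simp
  set f : α → {p : List Bool // p ∈ PosV t0} := fun a =>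
    dite ((SBT.leafPos t0 a).isSome)
      (fun h => (⟨(SBT.leafPos t0 a).get h, hmemget a h⟩ : {p : List Bool // p ∈ PosV t0}))
      (fun _ => ⟨[false], hF⟩) with hfdef
  have hfsome : ∀ a ∈ K.E, (SBT.leafPos t0 a).isSome := fun a ha =>
    (SBT.leafPos_isSome_iff t0 a).mpr (by rw [ht0supp]; exact ha)
  have hfval : ∀ (a : α) (h : (SBT.leafPos t0 a).isSome),
      SBT.leafPos t0 a = some (f a).1 := by
    intro a h
    rw [hfdef]
    simp only [dif_pos h]
    exact (Option.some_get h).symm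
  -- display of a leaf vertex is its bag
  have hdisplay : ∀ (v : {p : List Bool // p ∈ PosV t0}) (s : Set α),
      SBT.sub? t0 v.1 = some (SBT.lf s) → display K f v = s := by
    intro v s hsub
    have hsE : s ⊆ K.E := by
      have h2 := SBT.sub?_supp_subset v.1 t0 hsub
      rw [ht0supp] at h2
      exact fun x hx => h2 hx
    ext a
    simp only [display, Set.mem_setOf_eq]
    constructor
    · rintro ⟨haE, hfv⟩
      have hsome := hfsome a haE
      have hlp : SBT.leafPos t0 a = some v.1 := by rw [← hfv]; exact hfval a hsome
      obtain ⟨s2, hs2, ha2⟩ := SBT.leafPos_spec t0 a _ hlp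
      rw [hsub] at hs2
      injection hs2 with h
      injection h with h2
      exact h2 ▸ ha2
    · intro ha
      have haE : a ∈ K.E := hsE ha
      refine ⟨haE, ?_⟩
      have hlp := SBT.leafPos_unique t0 ht0disj v.1 s a hsub ha
      have hsome : (SBT.leafPos t0 a).isSome := by rw [hlp]; simp
      apply Subtype.ext
      have h3 := hfval a hsome
      rw [hlp] at h3
      injection h3 with h4
      exact h4.symm
  -- prefix side sets
  have hSW : ∀ (c : List Bool) (s' : SBT α), SBT.sub? t0 c = some s' →
      {a | a ∈ K.E ∧ c <+: (f a).1} = s'.supp := by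
    intro c s' hsub
    ext a
    simp only [Set.mem_setOf_eq]
    constructor
    · rintro ⟨haE, hpre⟩
      have hsome := hfsome a haE
      exact (SBT.leafPos_prefix_iff c t0 ht0disj hsub (hfval a hsome)).mp hpre
    · intro ha
      have haE : a ∈ K.E := by
        rw [← ht0supp]
        exact SBT.sub?_supp_subset c t0 hsub ha
      have hsome := hfsome a haE
      exact ⟨haE, (SBT.leafPos_prefix_iff c t0 ht0disj hsub (hfval a hsome)).mpr ha⟩
  -- no children below leaves, children below internal nodes
  have hnochild : ∀ (v : {p : List Bool // p ∈ PosV t0}) (s : Set α),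
      SBT.sub? t0 v.1 = some (SBT.lf s) → ∀ d : Bool, v.1 ++ [d] ∉ PosV t0 := by
    intro v s hsub d hmem
    have h2 := (mem_PosV.mp hmem).2
    rw [SBT.sub?_append, hsub] at h2
    simp at h2
  have hchildmem : ∀ (v : {p : List Bool // p ∈ PosV t0}) (l' r' : SBT α),
      SBT.sub? t0 v.1 = some (SBT.nd l' r') → ∀ d : Bool, v.1 ++ [d] ∈ PosV t0 := by
    intro v l' r' hsub d
    rw [mem_PosV]
    constructor
    · intro h; simp at h
    · rw [SBT.sub?_append, hsub]
      cases d <;> simp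
  -- the unique upward neighbour
  have hupnbr : ∀ v : {p : List Bool // p ∈ PosV t0},
      ∃ u : {p : List Bool // p ∈ PosV t0}, (TGraph t0).Adj v u ∧
      (∀ w : {p : List Bool // p ∈ PosV t0}, (TGraph t0).Adj v w →
        ((∃ d, w.1 = v.1 ++ [d]) ∨ w = u)) ∧
      (¬ ∃ d, u.1 = v.1 ++ [d]) := by
    intro v
    rcases List.eq_nil_or_concat' v.1 with h0 | ⟨q, d, hqd⟩
    · exact absurd h0 (posv_ne v)
    by_cases hq : q = []
    · subst hq
      simp only [List.nil_append] at hqd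
      cases d
      · -- v = [false], partner [true]
        refine ⟨⟨[true], hTmem⟩, Or.inl (Or.inr ⟨hqd, rfl⟩), ?_, ?_⟩
        · intro w hw
          rcases hw with (⟨d', hd'⟩ | ⟨h1, h2⟩) | (⟨d', hd'⟩ | ⟨h1, h2⟩)
          · exact Or.inl ⟨d', hd'⟩
          · exact Or.inr (Subtype.ext h2)
          · rw [hqd] at hd'
            rcases List.exists_cons_of_ne_nil (posv_ne w) with ⟨b, rest, hb⟩
            rw [hb] at hd'
            simp at hd'
          · rw [hqd] at h2
            simp at h2
        · rintro ⟨d', hd'⟩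
          rw [hqd] at hd'
          simp at hd'
      · -- v = [true], partner [false]
        refine ⟨⟨[false], hF⟩, Or.inr (Or.inr ⟨rfl, hqd⟩), ?_, ?_⟩
        · intro w hw
          rcases hw with (⟨d', hd'⟩ | ⟨h1, h2⟩) | (⟨d', hd'⟩ | ⟨h1, h2⟩)
          · exact Or.inl ⟨d', hd'⟩
          · rw [hqd] at h1
            simp at h1
          · rw [hqd] at hd'
            rcases List.exists_cons_of_ne_nil (posv_ne w) with ⟨b, rest, hb⟩
            rw [hb] at hd'
            simp at hd'
          · exact Or.inr (Subtype.ext h1)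
        · rintro ⟨d', hd'⟩
          rw [hqd] at hd'
          simp at hd'
    · have hqmem : q ∈ PosV t0 :=
        prefix_mem_PosV (by rw [hqd]; exact ⟨[d], rfl⟩) hq v.2
      have hv2 : 2 ≤ v.1.length := by
        rcases List.exists_cons_of_ne_nil hq with ⟨b, rest, hb⟩
        rw [hqd, hb]
        simp
      refine ⟨⟨q, hqmem⟩, Or.inr (Or.inl ⟨d, hqd⟩), ?_, ?_⟩
      · intro w hw
        rcases hw with (⟨d', hd'⟩ | ⟨h1, h2⟩) | (⟨d', hd'⟩ | ⟨h1, h2⟩)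
        · exact Or.inl ⟨d', hd'⟩
        · have := congrArg List.length h1
          simp at this
          omega
        · right
          apply Subtype.ext
          rw [hqd] at hd'
          exact (List.append_inj' hd' rfl).1.symm
        · have := congrArg List.length h2
          simp at this
          omega
      · rintro ⟨d', hd'⟩
        have h1 := congrArg List.length hd'
        have h2 := congrArg List.length hqd
        simp at h1 h2
        omega
  -- degree of a leaf
  have hleafdeg : ∀ (v : {p : List Bool // p ∈ PosV t0}) (s : Set α),
      SBT.sub? t0 v.1 = some (SBT.lf s) → ((TGraph t0).neighborSet v).ncard = 1 := by
    intro v s hsub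
    obtain ⟨u, hadj, huniq, _⟩ := hupnbr v
    have hset : (TGraph t0).neighborSet v = {u} := by
      ext w
      simp only [SimpleGraph.mem_neighborSet, Set.mem_singleton_iff]
      constructor
      · intro h
        rcases huniq w h with ⟨d, hd⟩ | h
        · exact absurd (hd ▸ w.2) (hnochild v s hsub d)
        · exact h
      · rintro rfl
        exact hadj
    rw [hset, Set.ncard_singleton]
  -- degree of an internal node
  have hnddeg : ∀ (v : {p : List Bool // p ∈ PosV t0}) (l' r' : SBT α),
      SBT.sub? t0 v.1 = some (SBT.nd l' r') → ((TGraph t0).neighborSet v).ncard = 3 := by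
    intro v l' r' hsub
    obtain ⟨u, hadj, huniq, hnotchild⟩ := hupnbr v
    set c1 : {p : List Bool // p ∈ PosV t0} := ⟨v.1 ++ [false], hchildmem v l' r' hsub false⟩
    set c2 : {p : List Bool // p ∈ PosV t0} := ⟨v.1 ++ [true], hchildmem v l' r' hsub true⟩
    have hset : (TGraph t0).neighborSet v = {u, c1, c2} := by
      ext w
      simp only [SimpleGraph.mem_neighborSet, Set.mem_insert_iff, Set.mem_singleton_iff]
      constructor
      · intro h
        rcases huniq w h with ⟨d, hd⟩ | h
        · cases d
          · exact Or.inr (Or.inl (Subtype.ext hd))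
          · exact Or.inr (Or.inr (Subtype.ext hd))
        · exact Or.inl h
      · rintro (rfl | rfl | rfl)
        · exact hadj
        · exact Or.inl (Or.inl ⟨false, rfl⟩)
        · exact Or.inl (Or.inl ⟨true, rfl⟩)
    have hu1 : u ≠ c1 := by
      intro h
      exact hnotchild ⟨false, by rw [h]⟩
    have hu2 : u ≠ c2 := by
      intro h
      exact hnotchild ⟨true, by rw [h]⟩
    have hc12 : c1 ≠ c2 := by
      intro h
      have := congrArg Subtype.val h
      have h2 := (List.append_inj' this rfl).2
      simp at h2
    rw [hset]
    rw [Set.ncard_insert_of_notMem (by simp [hu1, hu2]) (Set.toFinite _)]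
    rw [Set.ncard_insert_of_notMem (by simp [hc12]) (Set.toFinite _)]
    rw [Set.ncard_singleton]
  -- the PBD
  have hconn : (TGraph t0).Connected := by
    rw [SimpleGraph.connected_iff]
    constructor
    · intro x y
      have hreachF : ∀ z : {p : List Bool // p ∈ PosV t0},
          (TGraph t0).Reachable z ⟨[false], hF⟩ := by
        intro z
        by_cases h : [true] <+: z.1
        · have h1 := (reach_typeB hF hTmem z).1.mpr h
          have h2 : (TGraph t0).Reachable z ⟨[true], hTmem⟩ :=
            h1.mono (SimpleGraph.deleteEdges_le _)
          refine h2.trans ?_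
          have hadj : (TGraph t0).Adj ⟨[false], hF⟩ ⟨[true], hTmem⟩ :=
            Or.inl (Or.inr ⟨rfl, rfl⟩)
          exact hadj.symm.reachable
        · exact ((reach_typeB hF hTmem z).2.mpr h).mono (SimpleGraph.deleteEdges_le _)
      exact (hreachF x).trans (hreachF y).symm
    · exact ⟨⟨[false], hF⟩⟩
  have hacyc : (TGraph t0).IsAcyclic := by
    rw [SimpleGraph.isAcyclic_iff_forall_adj_isBridge]
    intro v w hadj
    rw [SimpleGraph.isBridge_iff]
    show ¬((TGraph t0).deleteEdges {s(v, w)}).Reachable v w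
    rcases hadj with (⟨d, hd⟩ | ⟨h1, h2⟩) | (⟨d, hd⟩ | ⟨h1, h2⟩)
    · -- w = v ++ [d]
      have hwm : v.1 ++ [d] ∈ PosV t0 := hd ▸ w.2
      have hw : w = ⟨v.1 ++ [d], hwm⟩ := Subtype.ext hd
      rw [hw]
      intro hreach
      have := (reach_typeA v.2 hwm (posv_ne v) ⟨v.1, v.2⟩).1.mp hreach
      have hlen := this.length_le
      simp at hlen
    · -- partner v=[false] w=[true]
      have hv : v = ⟨[false], hF⟩ := Subtype.ext h1
      have hw : w = ⟨[true], hTmem⟩ := Subtype.ext h2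
      rw [hv, hw]
      intro hreach
      have := (reach_typeB hF hTmem ⟨[false], hF⟩).1.mp hreach
      have hlen := this.eq_of_length (by simp)
      simp at hlen
    · -- v = w ++ [d]
      have hvm : w.1 ++ [d] ∈ PosV t0 := hd ▸ v.2
      have hv : v = ⟨w.1 ++ [d], hvm⟩ := Subtype.ext hd
      rw [hv, Sym2.eq_swap]
      intro hreach
      replace hreach := hreach.symm
      have := (reach_typeA w.2 hvm (posv_ne w) w).1.mp hreach
      have hlen := this.length_le
      simp at hlen
    · -- partner w=[false] v=[true]
      have hv : v = ⟨[true], hTmem⟩ := Subtype.ext h2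
      have hw : w = ⟨[false], hF⟩ := Subtype.ext h1
      rw [hv, hw, Sym2.eq_swap]
      intro hreach
      replace hreach := hreach.symm
      have := (reach_typeB hF hTmem ⟨[false], hF⟩).1.mp hreach
      have hlen := this.eq_of_length (by simp)
      simp at hlen
  have hcubic : ∀ x : {p : List Bool // p ∈ PosV t0},
      ((TGraph t0).neighborSet x).ncard = 1 ∨ ((TGraph t0).neighborSet x).ncard = 3 := by
    intro x
    rcases hx : SBT.sub? t0 x.1 with _ | s
    · exact absurd (posv_isSome x) (by rw [hx]; simp)
    · cases s with
      | lf s0 => exact Or.inl (hleafdeg x s0 hx)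
      | nd l' r' => exact Or.inr (hnddeg x l' r' hx)
  have hmaps : ∀ a ∈ K.E, ((TGraph t0).neighborSet (f a)).ncard = 1 := by
    intro a ha
    have hsome := hfsome a ha
    obtain ⟨s, hs, _⟩ := SBT.leafPos_spec t0 a _ (hfval a hsome)
    exact hleafdeg (f a) s hs
  set D : PBD K {p : List Bool // p ∈ PosV t0} :=
    ⟨TGraph t0, ⟨hconn, hacyc⟩, hcubic, f, hmaps⟩ with hDdef
  -- width
  have hwidth : widthLE K (TGraph t0) f (K.lam X) := by
    intro u w hadj
    rcases hadj with (⟨d, hd⟩ | ⟨h1, h2⟩) | (⟨d, hd⟩ | ⟨h1, h2⟩)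
    · -- w = u ++ [d] : side toward u is the complement of the subtree at w
      rcases hsw : SBT.sub? t0 (u.1 ++ [d]) with _ | s'
      · exact absurd (posv_isSome w) (by rw [hd, hsw]; simp)
      have hwm : u.1 ++ [d] ∈ PosV t0 := hd ▸ w.2
      have hw : w = ⟨u.1 ++ [d], hwm⟩ := Subtype.ext hd
      have hside : edgeSide K (TGraph t0) f u w = K.E \ s'.supp := by
        rw [← hSW (u.1 ++ [d]) s' hsw]
        ext a
        simp only [edgeSide, Set.mem_setOf_eq, Set.mem_diff]
        constructor
        · rintro ⟨haE, hreach⟩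
          refine ⟨haE, ?_⟩
          rw [hw] at hreach
          have := (reach_typeA u.2 hwm (posv_ne u) (f a)).2.mp hreach
          rintro ⟨_, hpre⟩
          exact this hpre
        · rintro ⟨haE, hnpre⟩
          refine ⟨haE, ?_⟩
          rw [hw]
          exact (reach_typeA u.2 hwm (posv_ne u) (f a)).2.mpr
            (fun hc => hnpre ⟨haE, hc⟩)
      rw [hside]
      have hb := hpartbound hsw
      rw [lam_symm hK hb.2]
      exact hb.1
    · -- u = [false], w = [true] : side toward u is E \ X
      have hu : u = ⟨[false], hF⟩ := Subtype.ext h1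
      have hw : w = ⟨[true], hTmem⟩ := Subtype.ext h2
      have hside : edgeSide K (TGraph t0) f u w = K.E \ tX.supp := by
        rw [← hSW [true] tX hsubT]
        ext a
        simp only [edgeSide, Set.mem_setOf_eq, Set.mem_diff]
        constructor
        · rintro ⟨haE, hreach⟩
          refine ⟨haE, ?_⟩
          rw [hu, hw] at hreach
          have := (reach_typeB hF hTmem (f a)).2.mp hreach
          rintro ⟨_, hpre⟩
          exact this hpre
        · rintro ⟨haE, hnpre⟩
          refine ⟨haE, ?_⟩
          rw [hu, hw]
          exact (reach_typeB hF hTmem (f a)).2.mpr (fun hc => hnpre ⟨haE, hc⟩)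
      rw [hside, hsupp, lam_symm hK hXE]
    · -- u = w ++ [d] : side toward u is the subtree at u
      rcases hsw : SBT.sub? t0 (w.1 ++ [d]) with _ | s'
      · exact absurd (posv_isSome u) (by rw [hd, hsw]; simp)
      have hum : w.1 ++ [d] ∈ PosV t0 := hd ▸ u.2
      have hu : u = ⟨w.1 ++ [d], hum⟩ := Subtype.ext hd
      have hside : edgeSide K (TGraph t0) f u w = s'.supp := by
        rw [← hSW (w.1 ++ [d]) s' hsw]
        ext a
        simp only [edgeSide, Set.mem_setOf_eq]
        constructor
        · rintro ⟨haE, hreach⟩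
          refine ⟨haE, ?_⟩
          rw [hu, Sym2.eq_swap] at hreach
          exact (reach_typeA w.2 hum (posv_ne w) (f a)).1.mp hreach
        · rintro ⟨haE, hpre⟩
          refine ⟨haE, ?_⟩
          rw [hu, Sym2.eq_swap]
          exact (reach_typeA w.2 hum (posv_ne w) (f a)).1.mpr hpre
      rw [hside]
      exact (hpartbound hsw).1
    · -- w = [false], u = [true] : side toward u is X
      have hu : u = ⟨[true], hTmem⟩ := Subtype.ext h2
      have hw : w = ⟨[false], hF⟩ := Subtype.ext h1
      have hside : edgeSide K (TGraph t0) f u w = tX.supp := by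
        rw [← hSW [true] tX hsubT]
        ext a
        simp only [edgeSide, Set.mem_setOf_eq]
        constructor
        · rintro ⟨haE, hreach⟩
          refine ⟨haE, ?_⟩
          rw [hu, hw, Sym2.eq_swap] at hreach
          exact (reach_typeB hF hTmem (f a)).1.mp hreach
        · rintro ⟨haE, hpre⟩
          refine ⟨haE, ?_⟩
          rw [hu, hw, Sym2.eq_swap]
          exact (reach_typeB hF hTmem (f a)).1.mpr hpre
      rw [hside, hsupp]
  -- conclude
  refine ⟨{p : List Bool // p ∈ PosV t0}, inferInstance, D, hwidth, ⟨[false], hF⟩, ?_, ?_, ?_⟩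
  · exact hleafdeg _ J hsubF
  · rw [show display K D.f ⟨[false], hF⟩ = J from hdisplay _ J hsubF]
  · intro x hleaf hne
    rcases hx : SBT.sub? t0 x.1 with _ | s
    · exact absurd (posv_isSome x) (by rw [hx]; simp)
    cases s with
    | nd l' r' =>
      have := hnddeg x l' r' hx
      have hL : ((TGraph t0).neighborSet x).ncard = 1 := hleaf
      omega
    | lf s0 =>
      have hdisp : display K D.f x = s0 := hdisplay x s0 hx
      rw [hdisp]
      -- identify the leaf
      rcases List.exists_cons_of_ne_nil (posv_ne x) with ⟨b, rest, hb⟩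
      cases b
      · -- false side: must be the root leaf
        exfalso
        apply hne
        apply Subtype.ext
        rw [hb]
        cases rest with
        | nil => rfl
        | cons b2 rest2 =>
          exfalso
          have := posv_isSome x
          rw [hb] at this
          rw [show SBT.sub? t0 (false :: b2 :: rest2) = SBT.sub? (SBT.lf J) (b2 :: rest2)
            from rfl] at this
          simp at this
      · -- true side: leaf of tX
        have hx' : SBT.sub? tX rest = some (SBT.lf s0) := by
          rw [← SBT.sub?_nd_true (SBT.lf J) tX rest, ← hb, ← ht0def]
          exact hx
        rcases SBT.slv_at rest tX hslvX hx' with h | ⟨e, h⟩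
        · rw [h]
          simp
        · rw [h]
          calc ({e} ∩ X).ncard ≤ ({e} : Set α).ncard :=
                Set.ncard_le_ncard Set.inter_subset_left (Set.finite_singleton e)
            _ = 1 := Set.ncard_singleton e

end Part9

/-- If `T` is a tangle of order `k` in a `k`-entangled connectivity
system and `X ∈ T` is `T`-linked, then `X` is `λ(X)`-branched. -/
theorem stmt14 {α : Type*} (K : PreSys α) (hK : K.IsConnSys) (k : ℕ)
    (hent : Entangled K k) (T : Set (Set α)) (hT : IsTangle K k T)
    (X : Set α) (hX : X ∈ T)
    (hlinked : ¬ ∃ Y ∈ T, X ⊆ Y ∧ K.lam Y < K.lam X) :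
    Branched K X (K.lam X) := by
  have hXE := tangle_subset_E hT hX
  rcases Set.eq_empty_or_nonempty X with rfl | hne
  · refine branched_of_tree K hK ∅ (Set.empty_subset _) (SBT.lf ∅) rfl trivial (Or.inl rfl) ?_
    intro p hp
    simp only [SBT.parts, Set.mem_singleton_iff] at hp
    subst hp
    exact le_rfl
  · have hlink : LinkedIn K T X := by
      refine ⟨hX, fun Z hZ hsub => ?_⟩
      by_contra hlt
      push_neg at hlt
      exact hlinked ⟨Z, hZ, hsub, hlt⟩
    obtain ⟨t, htsupp, htdisj, htslv, htparts⟩ :=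
      good_tree hK hent hT (K.lam X * (K.E.ncard + 1) + X.ncard) X hlink hne le_rfl
    exact branched_of_tree K hK X hXE t htsupp htdisj htslv htparts
end

section
/- Let M be a 2-entangled matroid with a tangle T of order 2 in K(M). Then every set in T consists of loops and coloops of M; consequently M has exactly one connected component with two or more elements. -/
open Set

variable {α : Type*} {V : Type*}

/-- A separator of `M`: a subset of the ground set with `λ_M(X) = 1`. -/
def IsSeparator {α : Type*} (M : Matroid α) (X : Set α) : Prop :=
  X ⊆ M.E ∧ lamM M X = 1

/-- A (connected) component of `M`: a minimal nonempty separator. -/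
def IsComponent {α : Type*} (M : Matroid α) (C : Set α) : Prop :=
  IsSeparator M C ∧ C.Nonempty ∧
    ∀ C' ⊆ C, C'.Nonempty → IsSeparator M C' → C' = C

/-! ### Auxiliary rank lemmas -/

section Aux

variable {M : Matroid α} {I J X Y A B C : Set α} {x : α}

lemma indep_finite' [M.Finite] (hI : M.Indep I) : I.Finite :=
  M.ground_finite.subset hI.subset_ground

lemma mrank_eq_ncard [M.Finite] (hJ : M.IsBasis' J X) : mrank M X = J.ncard := by
  have hub : ∀ n ∈ {n | ∃ I, M.Indep I ∧ I ⊆ X ∧ I.ncard = n}, n ≤ J.ncard := by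
    rintro n ⟨I, hI, hIX, rfl⟩
    obtain ⟨J', hJ', hIJ'⟩ := hI.subset_isBasis'_of_subset hIX
    have hcard : J'.ncard = J.ncard := by
      have h := hJ'.encard_eq_encard hJ
      rw [Set.ncard_def, h, ← Set.ncard_def]
    exact (Set.ncard_le_ncard hIJ' (indep_finite' hJ'.indep)).trans hcard.le
  exact le_antisymm (csSup_le ⟨J.ncard, J, hJ.indep, hJ.subset, rfl⟩ hub)
    (le_csSup ⟨J.ncard, hub⟩ ⟨J, hJ.indep, hJ.subset, rfl⟩)

lemma ncard_le_mrank [M.Finite] (hI : M.Indep I) (hIX : I ⊆ X) : I.ncard ≤ mrank M X := by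
  obtain ⟨J, hJ, hIJ⟩ := hI.subset_isBasis'_of_subset hIX
  rw [mrank_eq_ncard hJ]
  exact Set.ncard_le_ncard hIJ (indep_finite' hJ.indep)

lemma mrank_mono [M.Finite] (hXY : X ⊆ Y) : mrank M X ≤ mrank M Y := by
  obtain ⟨J, hJ⟩ := M.exists_isBasis' X
  rw [mrank_eq_ncard hJ]
  exact ncard_le_mrank hJ.indep (hJ.subset.trans hXY)

lemma mrank_empty [M.Finite] : mrank M (∅ : Set α) = 0 := by
  obtain ⟨J, hJ⟩ := M.exists_isBasis' ∅
  have h : J = ∅ := subset_empty_iff.mp hJ.subset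
  simp [mrank_eq_ncard hJ, h]

lemma mrank_submod [M.Finite] (X Y : Set α) :
    mrank M (X ∩ Y) + mrank M (X ∪ Y) ≤ mrank M X + mrank M Y := by
  obtain ⟨I, hI⟩ := M.exists_isBasis' (X ∩ Y)
  obtain ⟨J, hJ, hIJ⟩ := hI.indep.subset_isBasis'_of_subset
    (hI.subset.trans (inter_subset_left.trans subset_union_left))
  rw [mrank_eq_ncard hI, mrank_eq_ncard hJ]
  have hJfin : J.Finite := indep_finite' hJ.indep
  have h1 : (J ∩ X).ncard + (J ∩ Y).ncard
      = (J ∩ X ∩ (J ∩ Y)).ncard + (J ∩ X ∪ J ∩ Y).ncard :=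
    (Set.ncard_inter_add_ncard_union _ _ (hJfin.subset inter_subset_left)
      (hJfin.subset inter_subset_left)).symm
  have h2 : J ∩ X ∩ (J ∩ Y) = J ∩ (X ∩ Y) := by ext a; simp; tauto
  have h3 : J ∩ X ∪ J ∩ Y = J := by
    rw [← inter_union_distrib_left, inter_eq_self_of_subset_left hJ.subset]
  have h4 : I.ncard ≤ (J ∩ (X ∩ Y)).ncard :=
    Set.ncard_le_ncard (subset_inter hIJ hI.subset) (hJfin.subset inter_subset_left)
  have h5 : (J ∩ X).ncard ≤ mrank M X :=
    ncard_le_mrank (hJ.indep.subset inter_subset_left) inter_subset_right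
  have h6 : (J ∩ Y).ncard ≤ mrank M Y :=
    ncard_le_mrank (hJ.indep.subset inter_subset_left) inter_subset_right
  rw [h2, h3] at h1
  omega

lemma mrank_singleton_indep [M.Finite] (h : M.Indep {x}) : mrank M {x} = 1 := by
  obtain ⟨J, hJ⟩ := M.exists_isBasis' {x}
  have hle : mrank M {x} ≤ 1 := by
    rw [mrank_eq_ncard hJ]
    simpa using Set.ncard_le_ncard hJ.subset (Set.finite_singleton x)
  have hge : 1 ≤ mrank M {x} := by
    simpa using ncard_le_mrank h (subset_refl {x})
  omega

lemma base_ncard [M.Finite] (hB : M.IsBase B) : B.ncard = mrank M M.E :=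
  (mrank_eq_ncard hB.isBasis_ground.isBasis').symm

lemma rank_sum_ge [M.Finite] (hX : X ⊆ M.E) :
    mrank M M.E ≤ mrank M X + mrank M (M.E \ X) := by
  have h := mrank_submod (M := M) X (M.E \ X)
  rw [Set.inter_diff_self, Set.union_diff_cancel hX, mrank_empty] at h
  omega

lemma one_le_lam : 1 ≤ lamM M X := Nat.le_add_left 1 _

lemma lam_eq_one_iff [M.Finite] (hX : X ⊆ M.E) :
    lamM M X = 1 ↔ mrank M X + mrank M (M.E \ X) = mrank M M.E := by
  have h := rank_sum_ge hX
  unfold lamM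
  omega

/-! ### Separator lemmas -/

lemma sep_iff [M.Finite] :
    IsSeparator M X ↔ X ⊆ M.E ∧ mrank M X + mrank M (M.E \ X) = mrank M M.E := by
  unfold IsSeparator
  constructor
  · rintro ⟨h1, h2⟩; exact ⟨h1, (lam_eq_one_iff h1).mp h2⟩
  · rintro ⟨h1, h2⟩; exact ⟨h1, (lam_eq_one_iff h1).mpr h2⟩

lemma sep_empty [M.Finite] : IsSeparator M (∅ : Set α) := by
  rw [sep_iff]
  simp [mrank_empty]

lemma sep_ground [M.Finite] : IsSeparator M M.E := by
  rw [sep_iff]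
  simp [mrank_empty]

lemma sep_compl [M.Finite] (h : IsSeparator M X) : IsSeparator M (M.E \ X) := by
  rw [sep_iff] at h ⊢
  rw [Set.diff_diff_cancel_left h.1]
  exact ⟨diff_subset, by omega⟩

lemma sep_core [M.Finite] (hA : IsSeparator M A) (hB : IsSeparator M B) :
    (A ∩ B ⊆ M.E ∧ mrank M (A ∩ B) + mrank M (M.E \ (A ∩ B)) = mrank M M.E) ∧
    (A ∪ B ⊆ M.E ∧ mrank M (A ∪ B) + mrank M (M.E \ (A ∪ B)) = mrank M M.E) := by
  rw [sep_iff] at hA hB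
  have hAE := hA.1; have hBE := hB.1
  have e1 : M.E \ A ∩ (M.E \ B) = M.E \ (A ∪ B) := by ext a; simp; tauto
  have e2 : M.E \ A ∪ M.E \ B = M.E \ (A ∩ B) := by ext a; simp; tauto
  have h1 := mrank_submod (M := M) A B
  have h2 := mrank_submod (M := M) (M.E \ A) (M.E \ B)
  rw [e1, e2] at h2
  have g1 := rank_sum_ge (M := M) (X := A ∩ B) (inter_subset_left.trans hAE)
  have g2 := rank_sum_ge (M := M) (X := A ∪ B) (union_subset hAE hBE)
  have hA2 := hA.2; have hB2 := hB.2
  exact ⟨⟨inter_subset_left.trans hAE, by omega⟩, ⟨union_subset hAE hBE, by omega⟩⟩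

lemma sep_inter [M.Finite] (hA : IsSeparator M A) (hB : IsSeparator M B) :
    IsSeparator M (A ∩ B) :=
  sep_iff.mpr (sep_core hA hB).1

lemma sep_union [M.Finite] (hA : IsSeparator M A) (hB : IsSeparator M B) :
    IsSeparator M (A ∪ B) :=
  sep_iff.mpr (sep_core hA hB).2

lemma loop_or_coloop [M.Finite] (hx : IsSeparator M {x}) :
    (¬ M.Indep {x}) ∨ (∀ B, M.IsBase B → x ∈ B) := by
  by_cases h : M.Indep {x}
  · right
    intro B hB
    by_contra hxB
    have hBsub : B ⊆ M.E \ {x} := subset_diff_singleton hB.subset_ground hxB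
    have h1 : mrank M M.E ≤ mrank M (M.E \ {x}) := by
      rw [← base_ncard hB]; exact ncard_le_mrank hB.indep hBsub
    have h2 := (sep_iff.mp hx).2
    rw [mrank_singleton_indep h] at h2
    omega
  · exact Or.inl h

/-! ### Component lemmas -/

lemma exists_component [M.Finite] (hx : x ∈ M.E) : ∃ C, IsComponent M C ∧ x ∈ C := by
  have hEfin : M.E.Finite := M.ground_finite
  set S : Set ℕ := {n | ∃ C, IsSeparator M C ∧ x ∈ C ∧ C.ncard = n} with hS
  have hSne : S.Nonempty := ⟨M.E.ncard, M.E, sep_ground, hx, rfl⟩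
  obtain ⟨C, hCsep, hxC, hCcard⟩ := Nat.sInf_mem hSne
  have hCfin : C.Finite := hEfin.subset hCsep.1
  refine ⟨C, ⟨hCsep, ⟨x, hxC⟩, ?_⟩, hxC⟩
  intro C' hC'C hC'ne hC'sep
  by_cases hxC' : x ∈ C'
  · have hmem : C'.ncard ∈ S := ⟨C', hC'sep, hxC', rfl⟩
    have := Nat.sInf_le hmem
    exact Set.eq_of_subset_of_ncard_le hC'C (by omega) hCfin
  · exfalso
    set D := C ∩ (M.E \ C') with hD
    have hDsep : IsSeparator M D := sep_inter hCsep (sep_compl hC'sep)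
    have hxD : x ∈ D := ⟨hxC, hCsep.1 hxC, hxC'⟩
    have hmem : D.ncard ∈ S := ⟨D, hDsep, hxD, rfl⟩
    have h1 := Nat.sInf_le hmem
    have h2 : D.ncard ≤ C.ncard := Set.ncard_le_ncard inter_subset_left hCfin
    have hDC : D = C :=
      Set.eq_of_subset_of_ncard_le inter_subset_left (by omega) hCfin
    obtain ⟨y, hy⟩ := hC'ne
    have : y ∈ D := hDC ▸ hC'C hy
    exact this.2.2 hy

lemma comp_subset [M.Finite] (hC : IsComponent M C) (hA : IsSeparator M A)
    (hne : (C ∩ A).Nonempty) : C ⊆ A := by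
  have := hC.2.2 (C ∩ A) inter_subset_left hne (sep_inter hC.1 hA)
  rw [← this]
  exact inter_subset_right

lemma comp_disjoint [M.Finite] (hC : IsComponent M C) (hC' : IsComponent M A)
    (hne : C ≠ A) : C ∩ A = ∅ := by
  by_contra h
  have hne' : (C ∩ A).Nonempty := Set.nonempty_iff_ne_empty.mpr h
  have h1 : C ⊆ A := comp_subset hC hC'.1 hne'
  have h2 : A ⊆ C := comp_subset hC' hC.1 (by rwa [inter_comm] at hne')
  exact hne (h1.antisymm h2)

/-! ### Tangle lemmas -/

lemma mem_sep [M.Finite] {T : Set (Set α)} (hT : IsTangle (KM M) 2 T) (hA : A ∈ T) :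
    IsSeparator M A := by
  obtain ⟨h1, h2⟩ := hT.1 A hA
  refine ⟨h1, ?_⟩
  have := one_le_lam (M := M) (X := A)
  change lamM M A < 2 at h2
  omega

lemma sep_mem_iff [M.Finite] {T : Set (Set α)} (hT : IsTangle (KM M) 2 T)
    (hA : IsSeparator M A) : A ∈ T ↔ (M.E \ A) ∉ T := by
  have h2 : lamM M A < 2 := by rw [hA.2]; omega
  exact hT.2.1 A hA.1 h2

lemma ground_not_mem [M.Finite] {T : Set (Set α)} (hT : IsTangle (KM M) 2 T) :
    M.E ∉ T := by
  intro h
  exact hT.2.2.1 M.E h M.E h M.E h (by simp [KM])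

lemma empty_mem [M.Finite] {T : Set (Set α)} (hT : IsTangle (KM M) 2 T) :
    (∅ : Set α) ∈ T := by
  have h := sep_mem_iff hT (sep_empty (M := M))
  rw [Set.diff_empty] at h
  exact h.mpr (ground_not_mem hT)

lemma union_mem [M.Finite] {T : Set (Set α)} (hT : IsTangle (KM M) 2 T)
    (hA : A ∈ T) (hB : B ∈ T) : A ∪ B ∈ T := by
  have hsep := sep_union (mem_sep hT hA) (mem_sep hT hB)
  by_contra h
  have h2 : M.E \ (A ∪ B) ∈ T := by
    by_contra h3
    exact h ((sep_mem_iff hT hsep).mpr h3)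
  exact hT.2.2.1 A hA B hB _ h2 (by
    change A ∪ B ∪ (M.E \ (A ∪ B)) = M.E
    exact Set.union_diff_cancel hsep.1)

lemma ground_nonempty [M.Finite] {T : Set (Set α)} (hT : IsTangle (KM M) 2 T) :
    M.E.Nonempty := by
  rw [Set.nonempty_iff_ne_empty]
  intro h
  exact ground_not_mem hT (h ▸ empty_mem hT)

lemma singleton_mem [M.Finite] {T : Set (Set α)} (hT : IsTangle (KM M) 2 T)
    (hx : x ∈ M.E) (hsep : IsSeparator M {x}) : {x} ∈ T := by
  have hEfin : M.E.Finite := M.ground_finite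
  refine (sep_mem_iff hT hsep).mpr ?_
  intro h
  exact hT.2.2.2 _ h (by
    change (M.E \ {x}).ncard = M.E.ncard - 1
    exact Set.ncard_diff_singleton_of_mem hx)

/-- The tangle avoiding a fixed big component. -/
lemma tangle_of_comp [M.Finite] (hC : IsComponent M C) (h2 : 2 ≤ C.ncard) :
    IsTangle (KM M) 2 {A | A ⊆ M.E ∧ lamM M A < 2 ∧ A ∩ C = ∅} := by
  have hEfin : M.E.Finite := M.ground_finite
  have hCne : C.Nonempty := hC.2.1
  have hCE : C ⊆ M.E := hC.1.1
  refine ⟨fun A hA => ⟨hA.1, hA.2.1⟩, ?_, ?_, ?_⟩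
  · intro A hAE hlam
    change lamM M A < 2 at hlam
    have hAsep : IsSeparator M A := ⟨hAE, by have := one_le_lam (M := M) (X := A); omega⟩
    constructor
    · rintro ⟨-, -, hdisj⟩ ⟨-, -, hdisj'⟩
      have hdisj'' : (M.E \ A) ∩ C = ∅ := hdisj'
      obtain ⟨y, hy⟩ := hCne
      have hyA : y ∉ A := fun hyA => by
        have hmm : y ∈ A ∩ C := ⟨hyA, hy⟩
        rw [hdisj] at hmm
        exact hmm
      have hmm : y ∈ (M.E \ A) ∩ C := ⟨⟨hCE hy, hyA⟩, hy⟩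
      rw [hdisj''] at hmm
      exact hmm
    · intro h
      refine ⟨hAE, hlam, ?_⟩
      have hcsep := sep_compl hAsep
      have hne : ((M.E \ A) ∩ C).Nonempty := by
        by_contra hh
        exact h ⟨diff_subset, by
          change lamM M (M.E \ A) < 2
          have := hcsep.2; omega, Set.not_nonempty_iff_eq_empty.mp hh⟩
      have hsub : C ⊆ M.E \ A :=
        comp_subset hC hcsep (by rwa [inter_comm] at hne)
      ext y
      simp only [Set.mem_inter_iff, Set.mem_empty_iff_false, iff_false, not_and]
      intro hyA hyC
      exact (hsub hyC).2 hyA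
  · rintro A ⟨-, -, hA⟩ B ⟨-, -, hB⟩ D ⟨-, -, hD⟩ h
    obtain ⟨y, hy⟩ := hCne
    have hyE : y ∈ M.E := hCE hy
    have h' : A ∪ B ∪ D = M.E := h
    rw [← h'] at hyE
    rcases hyE with (hyA | hyB) | hyD
    · have : y ∈ A ∩ C := ⟨hyA, hy⟩
      rw [hA] at this; exact this
    · have : y ∈ B ∩ C := ⟨hyB, hy⟩
      rw [hB] at this; exact this
    · have : y ∈ D ∩ C := ⟨hyD, hy⟩
      rw [hD] at this; exact this
  · rintro A ⟨hAE, -, hdisj⟩ hcard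
    change A.ncard = M.E.ncard - 1 at hcard
    have hsub : C ⊆ M.E \ A := fun y hy =>
      ⟨hCE hy, fun hyA => by
        have hmm : y ∈ A ∩ C := ⟨hyA, hy⟩
        rw [hdisj] at hmm
        exact hmm⟩
    have h1 : C.ncard ≤ (M.E \ A).ncard := Set.ncard_le_ncard hsub hEfin.diff
    have h2 : (M.E \ A).ncard = M.E.ncard - A.ncard := Set.ncard_diff hAE (hEfin.subset hAE)
    have h3 : A.ncard ≤ M.E.ncard := Set.ncard_le_ncard hAE hEfin
    omega

end Aux

/-- If `M` is a `2`-entangled matroid with a tangle `T` of order `2`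
in `K(M)`, then every set in `T` consists of loops and coloops of `M`, and `M` has
exactly one connected component with two or more elements. -/
theorem stmt15 {α : Type*} (M : Matroid α) [M.Finite]
    (hent : Entangled (KM M) 2) (T : Set (Set α)) (hT : IsTangle (KM M) 2 T) :
    (∀ X ∈ T, ∀ x ∈ X, (¬ M.Indep {x}) ∨ (∀ B, M.IsBase B → x ∈ B)) ∧
    (∃! C : Set α, IsComponent M C ∧ 2 ≤ C.ncard) := by
  classical
  have hEfin : M.E.Finite := M.ground_finite
  have key : ∀ C : Set α, IsComponent M C → 2 ≤ C.ncard →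
      T = {A | A ⊆ M.E ∧ lamM M A < 2 ∧ A ∩ C = ∅} := fun C hC h2 =>
    hent 2 le_rfl T _ hT (tangle_of_comp hC h2)
  constructor
  · intro X hX x hxX
    have hsepX := mem_sep hT hX
    have hxE : x ∈ M.E := hsepX.1 hxX
    obtain ⟨C, hC, hxC⟩ := exists_component hxE
    by_cases h2 : 2 ≤ C.ncard
    · exfalso
      have hXmem : X ∈ {A | A ⊆ M.E ∧ lamM M A < 2 ∧ A ∩ C = ∅} := (key C hC h2) ▸ hX
      have hmm : x ∈ X ∩ C := ⟨hxX, hxC⟩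
      rw [hXmem.2.2] at hmm
      exact hmm
    · have hCfin : C.Finite := hEfin.subset hC.1.1
      have hpos : 0 < C.ncard := (Set.ncard_pos hCfin).mpr hC.2.1
      have hone : C.ncard = 1 := by omega
      obtain ⟨a, ha⟩ := Set.ncard_eq_one.mp hone
      have hCx : C = {x} := by
        rw [ha] at hxC ⊢
        simp only [Set.mem_singleton_iff] at hxC
        rw [hxC]
      exact loop_or_coloop (hCx ▸ hC.1)
  · have hbig : ∃ C, IsComponent M C ∧ 2 ≤ C.ncard := by
      by_contra hno
      push_neg at hno
      have hall : M.E ∈ T := by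
        refine Set.Finite.induction_on_subset (motive := fun s _ => s ∈ T) M.E hEfin (empty_mem hT) ?_
        intro a s haE hsE hns hsT
        obtain ⟨C, hC, haC⟩ := exists_component haE
        have hCfin : C.Finite := hEfin.subset hC.1.1
        have hpos : 0 < C.ncard := (Set.ncard_pos hCfin).mpr hC.2.1
        have hlt := hno C hC
        have hone : C.ncard = 1 := by omega
        obtain ⟨b, hb⟩ := Set.ncard_eq_one.mp hone
        have hCa : C = {a} := by
          rw [hb] at haC ⊢
          simp only [Set.mem_singleton_iff] at haC
          rw [haC]
        have h1 : {a} ∈ T := singleton_mem hT haE (hCa ▸ hC.1)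
        have h2 := union_mem hT h1 hsT
        rwa [singleton_union] at h2
      exact ground_not_mem hT hall
    obtain ⟨C, hC, h2⟩ := hbig
    refine ⟨C, ⟨hC, h2⟩, ?_⟩
    rintro C' ⟨hC', h2'⟩
    by_contra hne
    have hdisj : C' ∩ C = ∅ := comp_disjoint hC' hC hne
    have hmem : C' ∈ {A | A ⊆ M.E ∧ lamM M A < 2 ∧ A ∩ C = ∅} :=
      ⟨hC'.1.1, by rw [hC'.1.2]; omega, hdisj⟩
    rw [← key C hC h2, key C' hC' h2'] at hmem
    have hself : (C' ∩ C').Nonempty := by rw [inter_self]; exact hC'.2.1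
    rw [hmem.2.2] at hself
    exact Set.not_nonempty_empty hself
end
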